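/- arXiv:2211.03272 — 6 statements merged into one kernel-verified Lean document; each statement's English description precedes it below -/
import Mathlib

section
/- For every graph F with chromatic number χ(F) > 2 and every positive integer s, ex(n, {F, M_{s+1}}) = s(n − s) + O(1); that is, there exists a constant C = C(F, s) such that for all n, |ex(n, {F, M_{s+1}}) − s(n − s)| ≤ C. -/
open SimpleGraph Finset

/-- `Contains G H` means `G` contains a copy of `H`: an injective map preserving adjacency
(i.e. an injective graph homomorphism; isolated vertices of `H` need distinct hosts in `G`). -/
def Contains {V W : Type*} (G : SimpleGraph V) (H : SimpleGraph W) : Prop :=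
  ∃ f : W → V, Function.Injective f ∧ ∀ ⦃a b : W⦄, H.Adj a b → G.Adj (f a) (f b)

/-- `matchingGraph t` is the matching `M_t` consisting of `t` independent edges. -/
def matchingGraph (t : ℕ) : SimpleGraph (Fin t × Fin 2) :=
  SimpleGraph.fromRel (fun a b => a.1 = b.1)

/-- The number of edges of a graph. -/
noncomputable def edgeCount {V : Type*} (G : SimpleGraph V) : ℕ := G.edgeSet.ncard

/-- `exNum n P` is the maximum number of edges of an `n`-vertex graph satisfying the
freeness condition `P` (the extremal/Turán number). -/
noncomputable def exNum (n : ℕ) (P : SimpleGraph (Fin n) → Prop) : ℕ :=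
  sSup {m | ∃ G : SimpleGraph (Fin n), P G ∧ m = edgeCount G}

/-- `I` is a deletable color class of `F`: an independent set whose deletion decreases the
chromatic number (equivalently, a color class in some proper coloring of `F` with `χ(F)`
colors). `F.induce Iᶜ` is `F − I`, with isolated vertices retained. -/
def colorClassDel {V : Type*} (F : SimpleGraph V) (I : Set V) : Prop :=
  (∀ a ∈ I, ∀ b ∈ I, ¬ F.Adj a b) ∧ (F.induce Iᶜ).chromaticNumber < F.chromaticNumber

/-- `A` is a color class of a proper two-coloring of `F`: both `A` and its complement are
independent sets. -/
def twoColorClass {V : Type*} (F : SimpleGraph V) (A : Set V) : Prop :=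
  (∀ a ∈ A, ∀ b ∈ A, ¬ F.Adj a b) ∧ (∀ a ∈ Aᶜ, ∀ b ∈ Aᶜ, ¬ F.Adj a b)

lemma matchingGraph_adj {t : ℕ} {a b : Fin t × Fin 2} :
    (matchingGraph t).Adj a b ↔ a ≠ b ∧ a.1 = b.1 := by
  simp only [matchingGraph, fromRel_adj]
  constructor
  · rintro ⟨h, h2 | h2⟩
    · exact ⟨h, h2⟩
    · exact ⟨h, h2.symm⟩
  · rintro ⟨h, h2⟩; exact ⟨h, Or.inl h2⟩

lemma contains_matching_of {V : Type*} {G : SimpleGraph V} {k : ℕ}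
    (f : Fin k × Fin 2 → V) (hinj : Function.Injective f)
    (hadj : ∀ i : Fin k, G.Adj (f (i, 0)) (f (i, 1))) :
    Contains G (matchingGraph k) := by
  refine ⟨f, hinj, ?_⟩
  rintro ⟨a1, a2⟩ ⟨b1, b2⟩ hab
  rw [matchingGraph_adj] at hab
  obtain ⟨hne, h1⟩ := hab
  dsimp at h1
  subst h1
  have h2 : a2 ≠ b2 := fun h => hne (by rw [h])
  fin_cases a2 <;> fin_cases b2
  · exact absurd rfl h2
  · exact hadj a1
  · exact (hadj a1).symm
  · exact absurd rfl h2

lemma contains_matching_elim {V : Type*} {G : SimpleGraph V} {k : ℕ}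
    (h : Contains G (matchingGraph k)) :
    ∃ f : Fin k × Fin 2 → V, Function.Injective f ∧
      ∀ i : Fin k, G.Adj (f (i, 0)) (f (i, 1)) := by
  obtain ⟨f, hinj, hadj⟩ := h
  refine ⟨f, hinj, fun i => hadj ?_⟩
  rw [matchingGraph_adj]
  exact ⟨by simp, rfl⟩

/-- Append a new disjoint edge to a matching. -/
lemma contains_matching_succ {V : Type*} {G : SimpleGraph V} {k : ℕ}
    (f : Fin k × Fin 2 → V) (hinj : Function.Injective f)
    (hadj : ∀ i : Fin k, G.Adj (f (i, 0)) (f (i, 1)))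
    (x y : V) (hx : ∀ p, f p ≠ x) (hy : ∀ p, f p ≠ y) (hxy : G.Adj x y) :
    Contains G (matchingGraph (k + 1)) := by
  set g : Fin (k+1) × Fin 2 → V := fun p =>
    if h : (p.1 : ℕ) < k then f (⟨p.1, h⟩, p.2) else if p.2 = 0 then x else y with hg
  have hxyval : ∀ q2 : Fin 2, (if q2 = 0 then x else y) = x ∨
      (if q2 = 0 then x else y) = y := by
    intro q2; by_cases h : q2 = 0 <;> simp [h]
  have hginj : Function.Injective g := by
    rintro ⟨p1, p2⟩ ⟨q1, q2⟩ hpq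
    by_cases hp : (p1 : ℕ) < k <;> by_cases hq : (q1 : ℕ) < k <;>
      simp only [hg, hp, hq, dif_pos, dif_neg, not_false_iff] at hpq
    · obtain ⟨h1, h2⟩ := Prod.mk.injEq .. ▸ (hinj hpq)
      simp only [Fin.mk.injEq] at h1
      exact Prod.ext (Fin.ext h1) h2
    · rcases hxyval q2 with h | h <;> rw [h] at hpq
      · exact absurd hpq (hx _)
      · exact absurd hpq (hy _)
    · rcases hxyval p2 with h | h <;> rw [h] at hpq
      · exact absurd hpq.symm (hx _)
      · exact absurd hpq.symm (hy _)
    · have h1 : p1 = q1 := by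
        have := p1.isLt; have := q1.isLt
        exact Fin.ext (by omega)
      have h2 : p2 = q2 := by
        fin_cases p2 <;> fin_cases q2
        · rfl
        · exact absurd (by simpa using hpq) (G.ne_of_adj hxy)
        · exact absurd (by simpa using hpq : y = x).symm (G.ne_of_adj hxy)
        · rfl
      rw [h1, h2]
  refine contains_matching_of g hginj fun i => ?_
  by_cases h : (i : ℕ) < k
  · simpa only [hg, dif_pos h] using hadj ⟨i, h⟩
  · simpa [hg, dif_neg h] using hxy

/-- Replace the second endpoint of edge `i` by a fresh neighbor `a` of the first endpoint. -/
lemma contains_matching_replace {V : Type*} {G : SimpleGraph V} {k : ℕ}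
    (f : Fin k × Fin 2 → V) (hinj : Function.Injective f)
    (hadj : ∀ i : Fin k, G.Adj (f (i, 0)) (f (i, 1)))
    (i : Fin k) (a : V) (ha : ∀ p, f p ≠ a) (haa : G.Adj (f (i, 0)) a) :
    ∃ f' : Fin k × Fin 2 → V, Function.Injective f' ∧
      (∀ j : Fin k, G.Adj (f' (j, 0)) (f' (j, 1))) ∧
      (∀ p, f' p = a ∨ (f' p = f p ∧ p ≠ (i, 1))) := by
  refine ⟨fun p => if p = (i, 1) then a else f p, ?_, ?_, ?_⟩
  · intro p q hpq
    by_cases hp : p = (i, 1) <;> by_cases hq : q = (i, 1) <;>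
      simp only [hp, hq, if_pos, if_neg, not_false_iff, if_true] at hpq
    · rw [hp, hq]
    · exact absurd hpq.symm (ha q)
    · exact absurd hpq (ha p)
    · exact hinj hpq
  · intro j
    by_cases hj : j = i
    · subst hj; simpa using haa
    · have h0 : (j, (0 : Fin 2)) ≠ (i, 1) := by simp
      have h1 : (j, (1 : Fin 2)) ≠ (i, 1) := by simp [hj]
      simpa [h0, h1] using hadj j
  · intro p
    by_cases hp : p = (i, 1)
    · simp [hp]
    · simp [hp]

lemma card_edge_le {n s : ℕ} (G : SimpleGraph (Fin n)) [DecidableRel G.Adj]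
    (h : ¬ Contains G (matchingGraph (s + 1))) :
    G.edgeFinset.card ≤ s * n + s + 4 * (s * s) := by
  classical
  set P := fun k => Contains G (matchingGraph k) with hP
  have hP0 : P 0 :=
    contains_matching_of (fun p => p.1.elim0) (fun p => p.1.elim0) (fun i => i.elim0)
  set k := Nat.findGreatest P s with hkdef
  have hk_le : k ≤ s := Nat.findGreatest_le s
  have hPk : P k := Nat.findGreatest_spec (Nat.zero_le s) hP0
  have hPk1 : ¬ P (k + 1) := by
    rcases eq_or_lt_of_le hk_le with he | hlt
    · rw [he]; exact h
    · exact Nat.findGreatest_is_greatest (Nat.lt_succ_self k) hlt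
  obtain ⟨f, hinj, hadj⟩ := contains_matching_elim hPk
  set S : Finset (Fin n) := Finset.image f Finset.univ with hSdef
  have hSmem : ∀ p, f p ∈ S := fun p => mem_image_of_mem f (mem_univ p)
  have hScard : S.card = 2 * k := by
    rw [hSdef, card_image_of_injective _ hinj, card_univ]
    simp [Fintype.card_prod, mul_comm]
  have hnotS : ∀ x, x ∉ S → ∀ p, f p ≠ x := fun x hx p he => hx (he ▸ hSmem p)
  have htouch : ∀ x y : Fin n, G.Adj x y → x ∈ S ∨ y ∈ S := by
    intro x y hxy
    by_contra hc
    push_neg at hc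
    exact hPk1 (contains_matching_succ f hinj hadj x y (hnotS x hc.1) (hnotS y hc.2) hxy)
  have hsub : G.edgeFinset ⊆ S.biUnion (fun v => G.incidenceFinset v) := by
    intro e
    induction e using Sym2.ind with
    | _ x y =>
      intro he
      rw [mem_edgeFinset, mem_edgeSet] at he
      rcases htouch x y he with hv | hv
      · exact mem_biUnion.2 ⟨x, hv, by
          rw [mem_incidenceFinset, mk'_mem_incidenceSet_left_iff]; exact he⟩
      · exact mem_biUnion.2 ⟨y, hv, by
          rw [mem_incidenceFinset, mk'_mem_incidenceSet_right_iff]; exact he⟩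
  have h1 : G.edgeFinset.card ≤ ∑ v ∈ S, G.degree v := by
    refine (card_le_card hsub).trans (card_biUnion_le.trans ?_)
    exact le_of_eq (sum_congr rfl fun v _ => card_incidenceFinset_eq_degree G v)
  have hdeg : ∀ v : Fin n, G.degree v =
      ((G.neighborFinset v) ∩ S).card + ((G.neighborFinset v) \ S).card := by
    intro v
    rw [← card_neighborFinset_eq_degree]
    exact (card_inter_add_card_sdiff _ _).symm
  -- the per-edge bound
  have hper : ∀ i : Fin k,
      ((G.neighborFinset (f (i, 0))) \ S).card + ((G.neighborFinset (f (i, 1))) \ S).card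
        ≤ n + 1 := by
    intro i
    set A := (G.neighborFinset (f (i, 0))) \ S with hA
    set B := (G.neighborFinset (f (i, 1))) \ S with hB
    have hkey : ∀ a ∈ A, ∀ b ∈ B, a = b := by
      intro a ha b hb
      by_contra hab
      rw [hA, mem_sdiff, mem_neighborFinset] at ha
      rw [hB, mem_sdiff, mem_neighborFinset] at hb
      obtain ⟨f', hinj', hadj', hval⟩ :=
        contains_matching_replace f hinj hadj i a (hnotS a ha.2) ha.1
      have hy1 : ∀ p, f' p ≠ f (i, 1) := by
        intro p
        rcases hval p with hv | ⟨hv, hne⟩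
        · rw [hv]; intro hcon; exact ha.2 (hcon ▸ hSmem (i, 1))
        · rw [hv]; intro hcon; exact hne (hinj hcon)
      have hb1 : ∀ p, f' p ≠ b := by
        intro p
        rcases hval p with hv | ⟨hv, _⟩
        · rw [hv]; exact hab
        · rw [hv]; exact hnotS b hb.2 p
      exact hPk1 (contains_matching_succ f' hinj' hadj' (f (i, 1)) b hy1 hb1 hb.1)
    rcases A.eq_empty_or_nonempty with hAe | ⟨a, haA⟩
    · rw [hAe]
      simpa using le_trans (card_le_univ B) (by simp)
    · have hB1 : B.card ≤ 1 := by
        refine (card_le_card fun b hb => mem_singleton.2 ((hkey a haA b hb).symm)).trans ?_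
        simp
      have hAn : A.card ≤ n := le_trans (card_le_univ A) (by simp)
      omega
  calc G.edgeFinset.card ≤ ∑ v ∈ S, G.degree v := h1
    _ = ∑ v ∈ S, (((G.neighborFinset v) ∩ S).card + ((G.neighborFinset v) \ S).card) :=
        sum_congr rfl fun v _ => hdeg v
    _ = ∑ v ∈ S, ((G.neighborFinset v) ∩ S).card + ∑ v ∈ S, ((G.neighborFinset v) \ S).card :=
        sum_add_distrib
    _ ≤ S.card * S.card + ∑ v ∈ S, ((G.neighborFinset v) \ S).card := by
        have h2 : ∑ v ∈ S, ((G.neighborFinset v) ∩ S).card ≤ ∑ _v ∈ S, S.card :=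
          sum_le_sum fun v _ => card_le_card inter_subset_right
        rw [sum_const, smul_eq_mul] at h2
        omega
    _ ≤ S.card * S.card + k * (n + 1) := by
        have e1 : ∑ v ∈ S, ((G.neighborFinset v) \ S).card
            = ∑ p : Fin k × Fin 2, ((G.neighborFinset (f p)) \ S).card := by
          rw [hSdef]
          exact sum_image fun x _ y _ hxy => hinj hxy
        have e2 : ∑ p : Fin k × Fin 2, ((G.neighborFinset (f p)) \ S).card
            = ∑ i : Fin k, (((G.neighborFinset (f (i, 0))) \ S).card +
                ((G.neighborFinset (f (i, 1))) \ S).card) := by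
          rw [Fintype.sum_prod_type]
          exact sum_congr rfl fun i _ => Fin.sum_univ_two _
        have e3 : ∑ i : Fin k, (((G.neighborFinset (f (i, 0))) \ S).card +
                ((G.neighborFinset (f (i, 1))) \ S).card) ≤ k * (n + 1) := by
          refine le_trans (sum_le_sum fun i _ => hper i) ?_
          simp [mul_comm]
        rw [e1, e2]
        exact Nat.add_le_add le_rfl e3
    _ ≤ s * n + s + 4 * (s * s) := by
        rw [hScard]
        nlinarith [hk_le]

/-- complete bipartite graph on `Fin n` with parts of size `s` and `n - s`. -/
def bip (n s : ℕ) : SimpleGraph (Fin n) where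
  Adj x y := ((x : ℕ) < s ∧ s ≤ (y : ℕ)) ∨ ((y : ℕ) < s ∧ s ≤ (x : ℕ))
  symm := by constructor; intro x y h; tauto
  loopless := by constructor; intro x h; rcases h with ⟨h1, h2⟩ | ⟨h1, h2⟩ <;> omega

instance (n s : ℕ) : DecidableRel (bip n s).Adj := fun x y => by
  unfold bip; infer_instance

lemma bip_not_contains_F {V : Type*} {F : SimpleGraph V} (hF : 2 < F.chromaticNumber)
    (n s : ℕ) : ¬ Contains (bip n s) F := by
  rintro ⟨f, hinj, hhom⟩
  have hcol : F.Colorable 2 := by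
    refine ⟨Coloring.mk (fun v => if (f v : ℕ) < s then 0 else 1) ?_⟩
    intro a b hab
    rcases hhom hab with ⟨h1, h2⟩ | ⟨h1, h2⟩ <;> simp [h1, h2, Nat.not_lt.2 h2] <;> omega
  have := hcol.chromaticNumber_le
  have h2 : (2 : ℕ∞) < 2 := lt_of_lt_of_le hF (by exact_mod_cast this)
  exact lt_irrefl _ h2

lemma bip_not_contains_M (n s : ℕ) : ¬ Contains (bip n s) (matchingGraph (s + 1)) := by
  intro h
  obtain ⟨f, hinj, hadj⟩ := contains_matching_elim h
  set g : Fin (s + 1) → Fin n := fun i => if (f (i, 0) : ℕ) < s then f (i, 0) else f (i, 1)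
    with hg
  have hlt : ∀ i, (g i : ℕ) < s := by
    intro i
    rw [hg]
    by_cases h0 : (f (i, 0) : ℕ) < s
    · simpa [h0] using h0
    · rcases hadj i with ⟨h1, h2⟩ | ⟨h1, h2⟩
      · exact absurd h1 h0
      · simpa [h0] using h1
  have hgmem : ∀ i, g i = f (i, 0) ∨ g i = f (i, 1) := by
    intro i; rw [hg]; by_cases h0 : (f (i, 0) : ℕ) < s <;> simp [h0]
  have hginj : Function.Injective g := by
    intro i j hij
    rcases hgmem i with hi | hi <;> rcases hgmem j with hj | hj <;>
      rw [hi, hj] at hij <;>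
      simpa using congrArg Prod.fst (hinj hij)
  have : s + 1 ≤ s := by
    have := Fintype.card_le_of_injective (fun i => (⟨(g i : ℕ), hlt i⟩ : Fin s))
      (fun i j hij => hginj (Fin.ext (by simpa using hij)))
    simpa using this
  omega

lemma bip_edgeCount (n s : ℕ) (hsn : s ≤ n) : s * (n - s) ≤ edgeCount (bip n s) := by
  classical
  have hec : edgeCount (bip n s) = (bip n s).edgeFinset.card := by
    simp [edgeCount, Set.ncard_eq_toFinset_card', edgeFinset]
  rw [hec]
  have hcard : (Finset.univ : Finset (Fin s × Fin (n - s))).card = s * (n - s) := by simp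
  rw [← hcard]
  refine Finset.card_le_card_of_injOn
    (fun p => s(⟨(p.1 : ℕ), by have := p.1.isLt; omega⟩,
                 ⟨s + (p.2 : ℕ), by have := p.2.isLt; omega⟩)) ?_ ?_
  · rintro ⟨i, j⟩ -
    rw [Finset.mem_coe]; beta_reduce; rw [mem_edgeFinset, mem_edgeSet]
    left
    exact ⟨i.isLt, by simp⟩
  · rintro ⟨i, j⟩ - ⟨i', j'⟩ - h
    rw [Sym2.eq_iff] at h
    dsimp only at h
    rcases h with ⟨h1, h2⟩ | ⟨h1, h2⟩
    · simp only [Fin.mk.injEq, Prod.fst, Prod.snd] at h1 h2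
      refine Prod.ext (Fin.ext ?_) (Fin.ext ?_) <;> simp_all <;> omega
    · simp only [Fin.mk.injEq, Prod.fst, Prod.snd] at h1
      have := i.isLt
      simp_all

lemma edgeCount_eq_card {n : ℕ} (G : SimpleGraph (Fin n)) [DecidableRel G.Adj] :
    edgeCount G = G.edgeFinset.card := by
  simp [edgeCount, Set.ncard_eq_toFinset_card', edgeFinset]

lemma bot_free_F {V : Type*} {F : SimpleGraph V} (hF : 2 < F.chromaticNumber) (n : ℕ) :
    ¬ Contains (⊥ : SimpleGraph (Fin n)) F := by
  rintro ⟨f, hinj, hhom⟩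
  have hcol : F.Colorable 1 := ⟨Coloring.mk (fun _ => 0) (fun {a b} hab => (hhom hab).elim)⟩
  have hle := hcol.chromaticNumber_le
  have h2 : (2 : ℕ∞) < 1 := lt_of_lt_of_le hF (by exact_mod_cast hle)
  norm_num at h2

lemma bot_free_M (n t : ℕ) : ¬ Contains (⊥ : SimpleGraph (Fin n)) (matchingGraph (t + 1)) := by
  rintro ⟨f, hinj, hhom⟩
  exact hhom (a := (0, 0)) (b := (0, 1)) (matchingGraph_adj.2 ⟨fun h => by
    have h2 : (0 : Fin 2) = 1 := congrArg Prod.snd h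
    exact absurd h2 (by decide), rfl⟩)


/-- **Corollary.** If `χ(F) > 2` and `s ≥ 1`, then `ex(n, {F, M_{s+1}}) = s(n − s) + O(1)`. -/
theorem extremal_asymptotic {V : Type*} [Fintype V] (F : SimpleGraph V)
    (hF : 2 < F.chromaticNumber) (s : ℕ) (hs : 0 < s) :
    ∃ C : ℤ, ∀ n : ℕ,
      |(exNum n (fun G => ¬ Contains G F ∧ ¬ Contains G (matchingGraph (s + 1))) : ℤ) -
          (s : ℤ) * ((n : ℤ) - (s : ℤ))| ≤ C := by
  classical
  refine ⟨((5 * (s * s) + s : ℕ) : ℤ), fun n => ?_⟩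
  set 𝒮 : Set ℕ := {m | ∃ G : SimpleGraph (Fin n),
      (¬ Contains G F ∧ ¬ Contains G (matchingGraph (s + 1))) ∧ m = edgeCount G} with h𝒮
  have hne : 𝒮.Nonempty := ⟨edgeCount (⊥ : SimpleGraph (Fin n)),
    ⟨⊥, ⟨bot_free_F hF n, bot_free_M n s⟩, rfl⟩⟩
  have hub : ∀ m ∈ 𝒮, m ≤ s * n + s + 4 * (s * s) := by
    rintro m ⟨G, ⟨-, hM⟩, rfl⟩
    haveI : DecidableRel G.Adj := Classical.decRel G.Adj
    rw [edgeCount_eq_card]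
    exact card_edge_le G hM
  have hEdef : exNum n (fun G => ¬ Contains G F ∧ ¬ Contains G (matchingGraph (s + 1)))
      = sSup 𝒮 := rfl
  set E : ℕ := sSup 𝒮 with hE
  have hEub : E ≤ s * n + s + 4 * (s * s) := csSup_le hne hub
  rw [hEdef, abs_le]
  constructor
  · -- lower bound on the difference
    rcases le_or_gt s n with hsn | hsn
    · have hmem : edgeCount (bip n s) ∈ 𝒮 :=
        ⟨bip n s, ⟨bip_not_contains_F hF n s, bip_not_contains_M n s⟩, rfl⟩
      have hlb : s * (n - s) ≤ E :=
        le_trans (bip_edgeCount n s hsn) (le_csSup ⟨_, fun m hm => hub m hm⟩ hmem)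
      have hcast : ((s * (n - s) : ℕ) : ℤ) = (s : ℤ) * ((n : ℤ) - (s : ℤ)) := by
        push_cast [Nat.cast_sub hsn]
        ring
      have := (Nat.cast_le (α := ℤ)).2 hlb
      rw [hcast] at this
      have hC : (0 : ℤ) ≤ ((5 * (s * s) + s : ℕ) : ℤ) := by positivity
      linarith
    · have h1 : (s : ℤ) * ((n : ℤ) - (s : ℤ)) ≤ 0 := by
        have : (n : ℤ) - (s : ℤ) ≤ 0 := by
          have : (n : ℤ) < (s : ℤ) := by exact_mod_cast hsn
          linarith
        have hs0 : (0 : ℤ) ≤ s := by positivity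
        exact mul_nonpos_of_nonneg_of_nonpos hs0 this
      have h2 : (0 : ℤ) ≤ (E : ℤ) := by positivity
      have hC : (0 : ℤ) ≤ ((5 * (s * s) + s : ℕ) : ℤ) := by positivity
      linarith
  · have h1 : (E : ℤ) ≤ (s : ℤ) * n + s + 4 * (s * s) := by exact_mod_cast hEub
    have h2 : (s : ℤ) * ((n : ℤ) - (s : ℤ)) = s * n - s * s := by ring
    push_cast
    nlinarith [sq_nonneg ((s : ℤ))]
end

section
/- Let G be a graph with no matching of size s + 1. Then at most s vertices of G have degree greater than 2s. (Equivalently: if v₁, …, vₙ are the vertices of G in decreasing order of degree, then d(v_{s+1}) ≤ 2s.) -/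
open SimpleGraph Finset

/-- If `G` has no matching of size `s + 1`, then at most `s` vertices of `G` have degree
greater than `2s`. -/
theorem few_high_degree_vertices {V : Type*} [Fintype V] (G : SimpleGraph V)
    [DecidableRel G.Adj] (s : ℕ) (h : ¬ Contains G (matchingGraph (s + 1))) :
    {v : V | 2 * s < G.degree v}.ncard ≤ s := by
  classical
  by_contra hc
  push_neg at hc
  apply h
  set S : Finset V := Finset.univ.filter (fun v => 2 * s < G.degree v) with hS
  have hScard : {v : V | 2 * s < G.degree v}.ncard = S.card := by
    rw [Set.ncard_eq_toFinset_card']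
    congr 1
    ext v; simp [hS]
  obtain ⟨T, hTS, hTcard⟩ : ∃ T ⊆ S, T.card = s + 1 :=
    Finset.exists_subset_card_eq (by omega)
  have eT := T.equivFinOfCardEq hTcard
  set v : Fin (s + 1) → V := fun i => (eT.symm i : V) with hv
  have hvmem : ∀ i, v i ∈ T := fun i => (eT.symm i).2
  have hvinj : Function.Injective v := fun i j hij => by
    have := eT.symm.injective (Subtype.ext hij); exact this
  have hvdeg : ∀ i, 2 * s < G.degree (v i) := by
    intro i
    have := hTS (hvmem i)
    simpa [hS] using this
  have key : ∀ k : ℕ, (hk : k ≤ s + 1) → ∃ f : Fin k → V,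
      (∀ i : Fin k, G.Adj (v (Fin.castLE hk i)) (f i)) ∧ Function.Injective f ∧
      ∀ i, f i ∉ T := by
    intro k
    induction k with
    | zero =>
      exact fun _ => ⟨fun i => i.elim0, fun i => i.elim0,
        fun i => i.elim0, fun i => i.elim0⟩
    | succ k ih =>
      intro hk
      obtain ⟨f, hadj, hinj, hnot⟩ := ih (by omega)
      have hwlt : k < s + 1 := by omega
      set w := v ⟨k, hwlt⟩ with hw
      have hne : ((G.neighborFinset w) \ (T ∪ Finset.image f Finset.univ)).Nonempty := by
        rw [← Finset.card_pos]
        have hint : (G.neighborFinset w ∩ (T ∪ Finset.image f Finset.univ)).card ≤ 2 * s := by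
          have hsub : G.neighborFinset w ∩ (T ∪ Finset.image f Finset.univ)
              ⊆ T.erase w ∪ Finset.image f Finset.univ := by
            intro x hx
            simp only [Finset.mem_inter, Finset.mem_union] at hx ⊢
            obtain ⟨hn, hx⟩ := hx
            rcases hx with hx | hx
            · left
              refine Finset.mem_erase.mpr ⟨?_, hx⟩
              intro e
              exact G.notMem_neighborFinset_self w (e ▸ hn)
            · right; exact hx
          calc (G.neighborFinset w ∩ (T ∪ Finset.image f Finset.univ)).card
              ≤ (T.erase w ∪ Finset.image f Finset.univ).card := Finset.card_le_card hsub
            _ ≤ (T.erase w).card + (Finset.image f Finset.univ).card :=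
                Finset.card_union_le _ _
            _ ≤ s + k := by
                have h1 : (T.erase w).card = s := by
                  rw [Finset.card_erase_of_mem (hvmem _), hTcard]; omega
                have h2 : (Finset.image f Finset.univ).card ≤ k :=
                  le_trans Finset.card_image_le (by simp)
                omega
            _ ≤ 2 * s := by omega
        have hdeg : 2 * s < (G.neighborFinset w).card := by
          rw [G.card_neighborFinset_eq_degree]; exact hvdeg _
        have := Finset.card_sdiff_add_card_inter (G.neighborFinset w)
          (T ∪ Finset.image f Finset.univ)
        omega
      obtain ⟨u, hu⟩ := hne
      rw [Finset.mem_sdiff, Finset.mem_union] at hu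
      push_neg at hu
      obtain ⟨hun, huT, huf⟩ := hu
      refine ⟨fun i => if hi : (i : ℕ) < k then f ⟨i, hi⟩ else u, ?_, ?_, ?_⟩
      · intro i
        by_cases hi : (i : ℕ) < k
        · simp only [dif_pos hi]
          have : v (Fin.castLE hk i) = v (Fin.castLE (by omega) (⟨i, hi⟩ : Fin k)) := by
            congr 1
          rw [this]
          exact hadj ⟨i, hi⟩
        · simp only [dif_neg hi]
          have hik : (i : ℕ) = k := by omega
          have : Fin.castLE hk i = ⟨k, hwlt⟩ := by ext; simpa using hik
          rw [this, ← hw]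
          rwa [SimpleGraph.mem_neighborFinset] at hun
      · intro i j hij
        by_cases hi : (i : ℕ) < k <;> by_cases hj : (j : ℕ) < k
        · simp only [dif_pos hi, dif_pos hj] at hij
          exact Fin.ext (by simpa using congrArg Fin.val (hinj hij))
        · simp only [dif_pos hi, dif_neg hj] at hij
          exact absurd (hij ▸ Finset.mem_image_of_mem f (Finset.mem_univ _)) huf
        · simp only [dif_neg hi, dif_pos hj] at hij
          exact absurd (hij ▸ Finset.mem_image_of_mem f (Finset.mem_univ _)) huf
        · ext; omega
      · intro i
        by_cases hi : (i : ℕ) < k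
        · simp only [dif_pos hi]; exact hnot _
        · simp only [dif_neg hi]; exact huT
  obtain ⟨f, hadj, hinj, hnot⟩ := key (s + 1) le_rfl
  refine ⟨fun p => if p.2 = 0 then v p.1 else f p.1, ?_, ?_⟩
  · rintro ⟨i, a⟩ ⟨j, b⟩ hij
    fin_cases a <;> fin_cases b
    · have hij' : v i = v j := hij
      rw [hvinj hij']
    · have hij' : v i = f j := hij
      exact absurd (hij' ▸ hvmem i) (hnot j)
    · have hij' : f i = v j := hij
      exact absurd (hij'.symm ▸ hvmem j) (hnot i)
    · have hij' : f i = f j := hij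
      rw [hinj hij']
  · rintro ⟨i, a⟩ ⟨j, b⟩ hab
    rw [matchingGraph, SimpleGraph.fromRel_adj] at hab
    obtain ⟨hne, hd⟩ := hab
    have hij : i = j := by rcases hd with hh | hh <;> simp_all
    subst hij
    have hadj' : G.Adj (v i) (f i) := by
      have h3 := hadj i
      have h2 : Fin.castLE le_rfl i = i := by ext; rfl
      rwa [h2] at h3
    have hba : a ≠ b := fun e => hne (by rw [e])
    fin_cases a <;> fin_cases b
    · exact absurd rfl hba
    · exact hadj'
    · exact hadj'.symm
    · exact absurd rfl hba
end

section
/- Let G be a graph on n vertices with no matching of size s + 1, and let v₁, …, vₙ be its vertices listed in decreasing order of degree. Then the number of edges of G is at most d(v₁) + d(v₂) + ⋯ + d(v_{2s}), the sum of the 2s largest degrees. -/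
open SimpleGraph Finset

lemma matchingGraph_adj_s4 {t : ℕ} {p q : Fin t × Fin 2} :
    (matchingGraph t).Adj p q ↔ p.1 = q.1 ∧ p.2 ≠ q.2 := by
  obtain ⟨i, j⟩ := p; obtain ⟨k, l⟩ := q
  simp only [matchingGraph, SimpleGraph.fromRel_adj, ne_eq, Prod.mk.injEq]
  constructor
  · rintro ⟨hne, h⟩
    have hik : i = k := h.elim id Eq.symm
    subst hik
    exact ⟨rfl, fun hjl => hne ⟨rfl, hjl⟩⟩
  · rintro ⟨rfl, hjl⟩
    exact ⟨fun hc => hjl hc.2, Or.inl rfl⟩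

/-- the graph `G` with both vertices `a` and `b` (and all incident edges) avoided -/
def avoidG {V : Type*} (G : SimpleGraph V) (a b : V) : SimpleGraph V where
  Adj x y := G.Adj x y ∧ x ≠ a ∧ x ≠ b ∧ y ≠ a ∧ y ≠ b
  symm := ⟨fun x y ⟨h, h1, h2, h3, h4⟩ => ⟨h.symm, h3, h4, h1, h2⟩⟩
  loopless := ⟨fun x h => G.loopless.irrefl x h.1⟩

lemma otherFin2 (j : Fin 2) : ∃ l : Fin 2, j ≠ l := by
  fin_cases j
  · exact ⟨1, by decide⟩
  · exact ⟨0, by decide⟩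

lemma fin2_eq_of_ne_of_ne {j l : Fin 2} (h0 : ¬(j = 0 ∧ l ≠ 0)) (h1 : ¬(j ≠ 0 ∧ l = 0)) :
    j = l := by fin_cases j <;> fin_cases l <;> simp_all <;> decide

/-- a single edge gives a copy of `M₁` -/
lemma contains_one {V : Type*} {G : SimpleGraph V} {a b : V} (hab : G.Adj a b) :
    Contains G (matchingGraph 1) := by
  refine ⟨fun p => if p.2 = 0 then a else b, ?_, ?_⟩
  · rintro ⟨i, j⟩ ⟨k, l⟩ hpq
    have hik : i = k := Subsingleton.elim i k
    subst hik
    simp only at hpq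
    have : j = l := by
      by_cases hj : j = 0 <;> by_cases hl : l = 0 <;> simp [hj, hl] at hpq ⊢ <;>
        first
          | rfl
          | exact absurd hpq hab.ne
          | exact absurd hpq.symm hab.ne
          | omega
    simp [this]
  · rintro ⟨i, j⟩ ⟨k, l⟩ hadj
    rw [matchingGraph_adj_s4] at hadj
    obtain ⟨-, hjl⟩ := hadj
    simp only
    by_cases hj : j = 0 <;> by_cases hl : l = 0 <;> simp_all <;>
      first
        | exact hab
        | exact hab.symm
        | (exfalso; exact hjl (by fin_cases j <;> fin_cases l <;> simp_all))

/-- extending a matching of `avoidG G a b` by the edge `ab` -/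
lemma contains_extend {V : Type*} {G : SimpleGraph V} {a b : V} {s : ℕ} (hab : G.Adj a b)
    (h : Contains (avoidG G a b) (matchingGraph (s + 1))) :
    Contains G (matchingGraph (s + 2)) := by
  obtain ⟨f, hinj, hadj⟩ := h
  have hfa : ∀ p : Fin (s + 1) × Fin 2, f p ≠ a ∧ f p ≠ b := by
    rintro ⟨i, j⟩
    obtain ⟨l, hjl⟩ := otherFin2 j
    have : (matchingGraph (s + 1)).Adj (i, j) (i, l) := matchingGraph_adj_s4.mpr ⟨rfl, hjl⟩
    have := hadj this
    exact ⟨this.2.1, this.2.2.1⟩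
  classical
  refine ⟨fun p => if h : (p.1 : ℕ) < s + 1 then f (⟨p.1, h⟩, p.2) else
    (if p.2 = 0 then a else b), ?_, ?_⟩
  · rintro ⟨i, j⟩ ⟨k, l⟩ hpq
    simp only at hpq
    by_cases hi : (i : ℕ) < s + 1 <;> by_cases hk : (k : ℕ) < s + 1 <;>
      simp only [hi, hk, dif_pos, dif_neg, not_false_iff] at hpq
    · have := hinj hpq
      simp only [Prod.mk.injEq, Fin.mk.injEq] at this
      obtain ⟨h1, h2⟩ := this
      exact Prod.ext (Fin.ext h1) h2
    · exfalso
      by_cases hl : l = 0 <;> simp [hl] at hpq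
      · exact (hfa (⟨i, hi⟩, j)).1 hpq
      · exact (hfa (⟨i, hi⟩, j)).2 hpq
    · exfalso
      by_cases hj : j = 0 <;> simp [hj] at hpq
      · exact (hfa (⟨k, hk⟩, l)).1 hpq.symm
      · exact (hfa (⟨k, hk⟩, l)).2 hpq.symm
    · have hik : i = k := by
        have hi' : (i : ℕ) = s + 1 := by omega
        have hk' : (k : ℕ) = s + 1 := by omega
        exact Fin.ext (hi'.trans hk'.symm)
      have hjl : j = l := by
        refine fin2_eq_of_ne_of_ne ?_ ?_
        · rintro ⟨h0, h1⟩; simp [h0, h1] at hpq; exact hab.ne hpq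
        · rintro ⟨h0, h1⟩; simp [h0, h1] at hpq; exact hab.ne hpq.symm
      simp [hik, hjl]
  · rintro ⟨i, j⟩ ⟨k, l⟩ hpq
    rw [matchingGraph_adj_s4] at hpq
    obtain ⟨hik, hjl⟩ := hpq
    simp only at hik
    subst hik
    simp only at hjl ⊢
    by_cases hi : (i : ℕ) < s + 1 <;> simp only [hi, dif_pos, dif_neg, not_false_iff]
    · have hm : (matchingGraph (s + 1)).Adj (⟨i, hi⟩, j) (⟨i, hi⟩, l) :=
        matchingGraph_adj_s4.mpr ⟨rfl, hjl⟩
      exact (hadj hm).1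
    · by_cases hj : j = 0 <;> by_cases hl : l = 0 <;> simp [hj, hl]
      · exact absurd (hj.trans hl.symm) hjl
      · exact hab
      · exact hab.symm
      · exfalso; exact hjl (by fin_cases j <;> fin_cases l <;> simp_all)

/-- a graph with no matching of size `s+1` has a vertex cover of size at most `2s` -/
lemma exists_cover {n : ℕ} : ∀ (s : ℕ) (G : SimpleGraph (Fin n)),
    ¬ Contains G (matchingGraph (s + 1)) →
    ∃ S : Finset (Fin n), S.card ≤ 2 * s ∧ ∀ a b, G.Adj a b → a ∈ S ∨ b ∈ S := by
  intro s
  induction s with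
  | zero =>
    intro G hG
    refine ⟨∅, by simp, fun a b hab => absurd (contains_one hab) hG⟩
  | succ s ih =>
    intro G hG
    by_cases hE : ∀ a b, ¬ G.Adj a b
    · exact ⟨∅, by simp, fun a b hab => absurd hab (hE a b)⟩
    · push_neg at hE
      obtain ⟨a, b, hab⟩ := hE
      have h' : ¬ Contains (avoidG G a b) (matchingGraph (s + 1)) := by
        intro hc
        exact hG (contains_extend hab hc)
      obtain ⟨S', hS'card, hS'cov⟩ := ih (avoidG G a b) h'
      refine ⟨insert a (insert b S'), ?_, ?_⟩
      · calc (insert a (insert b S')).card ≤ (insert b S').card + 1 :=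
              Finset.card_insert_le _ _
          _ ≤ S'.card + 1 + 1 := by
              have := Finset.card_insert_le b S'; omega
          _ ≤ 2 * (s + 1) := by omega
      · intro x y hxy
        by_cases hxa : x = a
        · exact Or.inl (by simp [hxa])
        by_cases hxb : x = b
        · exact Or.inl (by simp [hxb])
        by_cases hya : y = a
        · exact Or.inr (by simp [hya])
        by_cases hyb : y = b
        · exact Or.inr (by simp [hyb])
        rcases hS'cov x y ⟨hxy, hxa, hxb, hya, hyb⟩ with h | h
        · exact Or.inl (by simp [h])
        · exact Or.inr (by simp [h])

/-- sum over any `k` indices of an antitone function is at most the sum over the first `k` -/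
lemma sum_le_sum_first {n k : ℕ} (f : Fin n → ℕ) (hf : ∀ i j : Fin n, i ≤ j → f j ≤ f i)
    (T : Finset (Fin n)) (hT : T.card ≤ k) :
    ∑ i ∈ T, f i ≤ ∑ i ∈ Finset.univ.filter (fun i : Fin n => (i : ℕ) < k), f i := by
  classical
  have hlt : ∀ t ∈ T, (T.filter (fun x => x < t)).card < n := by
    intro t _
    calc (T.filter (fun x => x < t)).card ≤ (Finset.Iio t).card :=
          Finset.card_le_card (fun x hx => by
            simp only [Finset.mem_filter] at hx
            exact Finset.mem_Iio.mpr hx.2)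
      _ = (t : ℕ) := Fin.card_Iio t
      _ < n := t.isLt
  set e : Fin n → Fin n := fun t =>
    if h : (T.filter (fun x => x < t)).card < n then ⟨_, h⟩ else t with he
  have hedef : ∀ t ∈ T, (e t : ℕ) = (T.filter (fun x => x < t)).card := by
    intro t ht
    simp only [he, dif_pos (hlt t ht)]
  have hele : ∀ t ∈ T, e t ≤ t := by
    intro t ht
    rw [Fin.le_def, hedef t ht]
    calc (T.filter (fun x => x < t)).card ≤ (Finset.Iio t).card :=
          Finset.card_le_card (fun x hx => by
            simp only [Finset.mem_filter] at hx
            exact Finset.mem_Iio.mpr hx.2)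
      _ = (t : ℕ) := Fin.card_Iio t
  have hemono : ∀ t ∈ T, ∀ t' ∈ T, t < t' → e t < e t' := by
    intro t ht t' ht' htt'
    rw [Fin.lt_def, hedef t ht, hedef t' ht']
    apply Finset.card_lt_card
    constructor
    · intro x hx
      simp only [Finset.mem_filter] at hx ⊢
      exact ⟨hx.1, lt_trans hx.2 htt'⟩
    · intro hsub
      have : t ∈ T.filter (fun x => x < t') := Finset.mem_filter.mpr ⟨ht, htt'⟩
      have := hsub this
      simp only [Finset.mem_filter] at this
      exact absurd this.2 (lt_irrefl t)
    
  have hinj : Set.InjOn e T := by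
    intro t ht t' ht' hee
    rcases lt_trichotomy t t' with h | h | h
    · exact absurd hee (ne_of_lt (hemono t ht t' ht' h))
    · exact h
    · exact absurd hee.symm (ne_of_lt (hemono t' ht' t ht h))
  have hmem : ∀ t ∈ T, e t ∈ Finset.univ.filter (fun i : Fin n => (i : ℕ) < k) := by
    intro t ht
    simp only [Finset.mem_filter, Finset.mem_univ, true_and]
    rw [hedef t ht]
    calc (T.filter (fun x => x < t)).card ≤ (T.erase t).card :=
          Finset.card_le_card (fun x hx => by
            simp only [Finset.mem_filter] at hx
            exact Finset.mem_erase.mpr ⟨ne_of_lt hx.2, hx.1⟩)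
      _ < T.card := Finset.card_erase_lt_of_mem ht
      _ ≤ k := hT
  calc ∑ i ∈ T, f i ≤ ∑ i ∈ T, f (e i) :=
        Finset.sum_le_sum (fun i hi => hf (e i) i (hele i hi))
    _ = ∑ i ∈ T.image e, f i := (Finset.sum_image (fun x hx y hy => hinj hx hy)).symm
    _ ≤ ∑ i ∈ Finset.univ.filter (fun i : Fin n => (i : ℕ) < k), f i :=
        Finset.sum_le_sum_of_subset (fun x hx => by
          obtain ⟨t, ht, rfl⟩ := Finset.mem_image.mp hx
          exact hmem t ht)


/-- If an `n`-vertex graph `G` has no matching of size `s + 1` and its vertices are listed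
in decreasing order of degree, then the number of edges of `G` is at most the sum of the
`2s` largest degrees. -/
theorem edges_le_sum_largest_degrees {n : ℕ} (G : SimpleGraph (Fin n))
    [DecidableRel G.Adj] (s : ℕ) (h : ¬ Contains G (matchingGraph (s + 1)))
    (v : Equiv.Perm (Fin n))
    (hv : ∀ i j : Fin n, i ≤ j → G.degree (v j) ≤ G.degree (v i)) :
    G.edgeFinset.card ≤
      ∑ i ∈ Finset.univ.filter (fun i : Fin n => (i : ℕ) < 2 * s), G.degree (v i) := by
  classical
  obtain ⟨S, hScard, hScov⟩ := exists_cover s G h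
  have hsub : G.edgeFinset ⊆ S.biUnion (fun u => G.incidenceFinset u) := by
    intro e he
    induction e using Sym2.ind with
    | _ x y =>
      have hxy : G.Adj x y := by
        rwa [SimpleGraph.mem_edgeFinset, SimpleGraph.mem_edgeSet] at he
      rcases hScov x y hxy with hx | hy
      · exact Finset.mem_biUnion.mpr ⟨x, hx, by
          rw [SimpleGraph.mem_incidenceFinset]
          exact ⟨(G.mem_edgeSet).mpr hxy, Sym2.mem_mk_left x y⟩⟩
      · exact Finset.mem_biUnion.mpr ⟨y, hy, by
          rw [SimpleGraph.mem_incidenceFinset]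
          exact ⟨(G.mem_edgeSet).mpr hxy, Sym2.mem_mk_right x y⟩⟩
  have h1 : G.edgeFinset.card ≤ ∑ u ∈ S, G.degree u := by
    calc G.edgeFinset.card ≤ (S.biUnion (fun u => G.incidenceFinset u)).card :=
          Finset.card_le_card hsub
      _ ≤ ∑ u ∈ S, (G.incidenceFinset u).card := Finset.card_biUnion_le
      _ = ∑ u ∈ S, G.degree u := by
          exact Finset.sum_congr rfl (fun u _ => G.card_incidenceFinset_eq_degree u)
  have h2 : ∑ u ∈ S, G.degree u = ∑ i ∈ S.image v.symm, G.degree (v i) := by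
    rw [Finset.sum_image (fun x _ y _ hxy => v.symm.injective hxy)]
    exact Finset.sum_congr rfl (fun u _ => by rw [Equiv.apply_symm_apply])
  have h3 : (S.image v.symm).card ≤ 2 * s := by
    rw [Finset.card_image_of_injective S v.symm.injective]
    exact hScard
  calc G.edgeFinset.card ≤ ∑ u ∈ S, G.degree u := h1
    _ = ∑ i ∈ S.image v.symm, G.degree (v i) := h2
    _ ≤ ∑ i ∈ Finset.univ.filter (fun i : Fin n => (i : ℕ) < 2 * s), G.degree (v i) :=
        sum_le_sum_first (fun i => G.degree (v i)) hv (S.image v.symm) h3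
end

section
/- Let F be a connected bipartite graph, p = p(F) ≤ s, and n ≥ 2s + p. Then ex(n, {F, M_{s+1}}) ≥ (p − 1)(n + p − 2s) + ex(2s − 2p + 1, F). (Witness: the disjoint union of the complete bipartite graph K_{p−1, n+p−2s} and an F-free graph on 2s − 2p + 1 vertices with the maximum number of edges; every component is F-free and the matching number is at most (p − 1) + (s − p) < s + 1.) -/
open SimpleGraph Finset

/- ### Auxiliary lemmas -/

lemma edgeCount_iso {V W : Type*} {G : SimpleGraph V} {G' : SimpleGraph W} (e : G ≃g G') :
    edgeCount G = edgeCount G' := by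
  rw [edgeCount, edgeCount, ← Nat.card_coe_set_eq, ← Nat.card_coe_set_eq]
  exact Nat.card_congr e.mapEdgeSet

lemma edgeSet_sum {α β : Type*} (G : SimpleGraph α) (H : SimpleGraph β) :
    (G ⊕g H).edgeSet = Sym2.map Sum.inl '' G.edgeSet ∪ Sym2.map Sum.inr '' H.edgeSet := by
  ext e
  induction e using Sym2.ind with
  | _ x y =>
    constructor
    · intro he
      rw [mem_edgeSet] at he
      match x, y, he with
      | Sum.inl x, Sum.inl y, he => exact Or.inl ⟨s(x, y), he, rfl⟩
      | Sum.inr x, Sum.inr y, he => exact Or.inr ⟨s(x, y), he, rfl⟩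
    · rintro (⟨e', he, hme⟩ | ⟨e', he, hme⟩) <;>
        · induction e' using Sym2.ind with
          | _ a b =>
            rw [Sym2.map_pair_eq, Sym2.eq_iff] at hme
            rw [mem_edgeSet]
            rcases hme with ⟨rfl, rfl⟩ | ⟨rfl, rfl⟩
            · exact he
            · exact he.symm

lemma edgeCount_sum {α β : Type*} [Fintype α] [Fintype β] (G : SimpleGraph α)
    (H : SimpleGraph β) : edgeCount (G ⊕g H) = edgeCount G + edgeCount H := by
  rw [edgeCount, edgeSet_sum, Set.ncard_union_eq,
    Set.ncard_image_of_injective _ (Sym2.map.injective Sum.inl_injective),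
    Set.ncard_image_of_injective _ (Sym2.map.injective Sum.inr_injective)]
  · rfl
  · rw [Set.disjoint_left]
    rintro e ⟨e1, -, rfl⟩ ⟨e2, -, he⟩
    induction e1 using Sym2.ind with
    | _ a b =>
      induction e2 using Sym2.ind with
      | _ c d =>
        rw [Sym2.map_pair_eq, Sym2.map_pair_eq, Sym2.eq_iff] at he
        rcases he with ⟨h, -⟩ | ⟨-, h⟩ <;> exact Sum.inl_ne_inr h.symm

lemma edgeCount_completeBipartite (a b : ℕ) :
    edgeCount (completeBipartiteGraph (Fin a) (Fin b)) = a * b := by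
  rw [edgeCount, ← Nat.card_coe_set_eq]
  have e : Fin a × Fin b ≃ (completeBipartiteGraph (Fin a) (Fin b)).edgeSet := by
    apply Equiv.ofBijective (fun q => ⟨s(Sum.inl q.1, Sum.inr q.2), by simp⟩)
    constructor
    · rintro ⟨x, y⟩ ⟨x', y'⟩ h
      simp only [Subtype.mk_eq_mk, Sym2.eq_iff] at h
      rcases h with ⟨h1, h2⟩ | ⟨h1, h2⟩
      · simp_all
      · exact absurd h1 (Sum.inl_ne_inr)
    · rintro ⟨e, he⟩
      induction e using Sym2.ind with
      | _ x y =>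
        rw [mem_edgeSet] at he
        match x, y, he with
        | Sum.inl x, Sum.inr y, _ => exact ⟨(x, y), rfl⟩
        | Sum.inr x, Sum.inl y, _ => exact ⟨(y, x), by simp [Sym2.eq_swap]⟩
  rw [← Nat.card_congr e, Nat.card_eq_fintype_card, Fintype.card_prod,
    Fintype.card_fin, Fintype.card_fin]

lemma bddAbove_exSet (n : ℕ) (P : SimpleGraph (Fin n) → Prop) :
    BddAbove {m | ∃ G : SimpleGraph (Fin n), P G ∧ m = edgeCount G} := by
  refine ⟨(Set.univ : Set (Sym2 (Fin n))).ncard, ?_⟩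
  rintro m ⟨G, -, rfl⟩
  exact Set.ncard_le_ncard (Set.subset_univ _) Set.finite_univ

lemma le_exNum {n : ℕ} {P : SimpleGraph (Fin n) → Prop} {G : SimpleGraph (Fin n)} (hG : P G) :
    edgeCount G ≤ exNum n P :=
  le_csSup (bddAbove_exSet n P) ⟨G, hG, rfl⟩

lemma exNum_exists {n : ℕ} {P : SimpleGraph (Fin n) → Prop} (h : ∃ G, P G) :
    ∃ G : SimpleGraph (Fin n), P G ∧ edgeCount G = exNum n P := by
  obtain ⟨G0, hG0⟩ := h
  have : exNum n P ∈ {m | ∃ G : SimpleGraph (Fin n), P G ∧ m = edgeCount G} :=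
    Nat.sSup_mem ⟨_, G0, hG0, rfl⟩ (bddAbove_exSet n P)
  obtain ⟨G, hG, hGe⟩ := this
  exact ⟨G, hG, hGe.symm⟩

lemma exNum_empty {n : ℕ} {P : SimpleGraph (Fin n) → Prop} (h : ∀ G, ¬ P G) :
    exNum n P = 0 := by
  have : {m | ∃ G : SimpleGraph (Fin n), P G ∧ m = edgeCount G} = ∅ := by
    ext m; simp only [Set.mem_setOf_eq, Set.mem_empty_iff_false, iff_false]
    rintro ⟨G, hG, -⟩; exact h G hG
  rw [exNum, this, csSup_empty]; rfl

lemma contains_of_iso {V W X : Type*} {G : SimpleGraph V} {G' : SimpleGraph W}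
    {H : SimpleGraph X} (e : G ≃g G') (h : Contains G' H) : Contains G H := by
  obtain ⟨f, hinj, hadj⟩ := h
  exact ⟨fun x => e.symm (f x), (e.symm.injective).comp hinj,
    fun a b hab => e.symm.map_adj_iff.mpr (hadj hab)⟩

lemma hom_side {α β X : Type*} {G : SimpleGraph α} {H : SimpleGraph β} {F : SimpleGraph X}
    (hF : F.Connected) (f : X → α ⊕ β)
    (hf : ∀ ⦃a b⦄, F.Adj a b → (G ⊕g H).Adj (f a) (f b)) :
    (∀ x, (f x).isLeft) ∨ (∀ x, (f x).isRight) := by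
  obtain ⟨x0⟩ := hF.nonempty
  have key : ∀ x, (f x).isLeft = (f x0).isLeft := by
    intro x
    obtain ⟨w⟩ := hF.preconnected x x0
    induction w with
    | nil => rfl
    | @cons u v _ h _ ih =>
      have huv := hf h
      rw [← ih]
      cases hu : f u <;> cases hv : f v <;> rw [hu, hv] at huv <;> simp_all [SimpleGraph.sum]
  cases hL : (f x0).isLeft
  · exact Or.inr fun x => by have := key x; rw [hL] at this; simpa [Sum.not_isLeft] using this
  · exact Or.inl fun x => by rw [key x, hL]

lemma not_contains_cbg {V : Type*} [Fintype V] (F : SimpleGraph V) (p : ℕ)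
    (hp : IsLeast {k : ℕ | ∃ A : Set V, twoColorClass F A ∧ A.ncard = k} p)
    (a b : ℕ) (ha : a < p) :
    ¬ Contains (completeBipartiteGraph (Fin a) (Fin b)) F := by
  rintro ⟨f, hinj, hadj⟩
  set A : Set V := {v | (f v).isLeft} with hA
  have hc : twoColorClass F A := by
    constructor
    · intro u hu v hv hadj'
      have h2 := hadj hadj'
      simp only [hA, Set.mem_setOf_eq, Sum.isLeft_iff] at hu hv
      obtain ⟨y, hy⟩ := hu; obtain ⟨z, hz⟩ := hv
      rw [hy, hz] at h2
      simp [completeBipartiteGraph] at h2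
    · intro u hu v hv hadj'
      have h2 := hadj hadj'
      simp only [hA, Set.mem_compl_iff, Set.mem_setOf_eq, Sum.not_isLeft, Sum.isRight_iff]
        at hu hv
      obtain ⟨y, hy⟩ := hu; obtain ⟨z, hz⟩ := hv
      rw [hy, hz] at h2
      simp [completeBipartiteGraph] at h2
  have hle : p ≤ A.ncard := hp.2 ⟨A, hc, rfl⟩
  have hub : A.ncard ≤ a := by
    rw [← Nat.card_coe_set_eq]
    have hi : Function.Injective (fun v : A => (f v).getLeft v.2) := by
      rintro ⟨u, hu⟩ ⟨v, hv⟩ h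
      simp only at h
      have h1 : f u = Sum.inl ((f v).getLeft hv) := by
        rw [← h]; exact (Sum.inl_getLeft _ hu).symm
      have h2 : f v = Sum.inl ((f v).getLeft hv) := (Sum.inl_getLeft _ hv).symm
      exact Subtype.ext (hinj (h1.trans h2.symm))
    calc Nat.card A ≤ Nat.card (Fin a) := Nat.card_le_card_of_injective _ hi
      _ = a := by simp
  omega

lemma matching_free {a b c t : ℕ} (H : SimpleGraph (Fin c)) (hlt : 2 * a + c < 2 * t) :
    ¬ Contains ((completeBipartiteGraph (Fin a) (Fin b)) ⊕g H) (matchingGraph t) := by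
  rintro ⟨f, hinj, hadj⟩
  set K := completeBipartiteGraph (Fin a) (Fin b) with hK
  have hedge : ∀ i : Fin t, (K ⊕g H).Adj (f (i, 0)) (f (i, 1)) := by
    intro i
    apply hadj
    rw [matchingGraph, SimpleGraph.fromRel_adj]
    exact ⟨by simp, Or.inl rfl⟩
  set T : Finset (Fin t) := univ.filter (fun i => (f (i, 0)).isRight) with hT
  have hTr : ∀ i ∈ T, ∀ x : Fin 2, (f (i, x)).isRight := by
    intro i hi x
    rw [hT, mem_filter] at hi
    obtain ⟨u, hu⟩ := Sum.isRight_iff.mp hi.2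
    have he := hedge i
    rw [hu] at he
    have h1 : (f (i, 1)).isRight := by
      cases hv : f (i, 1)
      · rw [hv] at he; simp [SimpleGraph.sum] at he
      · simp
    fin_cases x
    · exact hi.2
    · exact h1
  have hTcard : 2 * T.card ≤ c := by
    have h1 : (T ×ˢ (univ : Finset (Fin 2))).card ≤ ((univ : Finset (Fin c)).image some).card := by
      apply card_le_card_of_injOn (fun q => (f q).getRight?)
      · rintro ⟨i, x⟩ hq
        rw [mem_coe, mem_product] at hq
        obtain ⟨u, hu⟩ := Sum.isRight_iff.mp (hTr i hq.1 x)
        simp [hu]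
      · rintro ⟨i, x⟩ hq ⟨j, y⟩ hq' h
        simp only [coe_product, Set.mem_prod, mem_coe] at hq hq'
        obtain ⟨u, hu⟩ := Sum.isRight_iff.mp (hTr i hq.1 x)
        obtain ⟨v, hv⟩ := Sum.isRight_iff.mp (hTr j hq'.1 y)
        simp only [hu, hv, Sum.getRight?] at h
        apply hinj
        rw [hu, hv]
        injection h with h'
        rw [h']
    rw [card_product, card_univ, Fintype.card_fin,
      card_image_of_injective _ (Option.some_injective _), card_univ, Fintype.card_fin] at h1
    omega
  have hTc : Tᶜ.card ≤ a := by
    classical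
    set ψ : Fin t → Option (Fin a) :=
      fun i => ((f (i, 0)).getLeft?.bind Sum.getLeft?).orElse
        (fun _ => (f (i, 1)).getLeft?.bind Sum.getLeft?) with hψ
    have key : ∀ i ∈ Tᶜ, ∃ x : Fin a, ψ i = some x ∧
        ∃ z : Fin 2, f (i, z) = Sum.inl (Sum.inl x) := by
      intro i hi
      rw [mem_compl, hT, mem_filter] at hi
      push_neg at hi
      have hl : (f (i, 0)).isLeft := by
        cases hfi : f (i, 0)
        · simp
        · rw [hfi] at hi; simp at hi
      obtain ⟨w, hw⟩ := Sum.isLeft_iff.mp hl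
      have he := hedge i
      rw [hw] at he
      obtain ⟨w', hw'⟩ : ∃ w', f (i, 1) = Sum.inl w' := by
        cases hv : f (i, 1)
        · exact ⟨_, rfl⟩
        · rw [hv] at he; simp [SimpleGraph.sum] at he
      rw [hw'] at he
      have hkadj : K.Adj w w' := he
      rw [hK] at hkadj
      rcases hkadj with ⟨h1, h2⟩ | ⟨h1, h2⟩
      · obtain ⟨x, hx⟩ := Sum.isLeft_iff.mp h1
        refine ⟨x, ?_, 0, by rw [hw, hx]⟩
        rw [hψ]; simp [hw, hx]
      · obtain ⟨x, hx⟩ := Sum.isLeft_iff.mp h2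
        obtain ⟨y, hy⟩ := Sum.isRight_iff.mp h1
        refine ⟨x, ?_, 1, by rw [hw', hx]⟩
        rw [hψ]; simp [hw, hw', hx, hy, Option.orElse]
    have h1 : Tᶜ.card ≤ ((univ : Finset (Fin a)).image some).card := by
      apply card_le_card_of_injOn ψ
      · intro i hi
        obtain ⟨x, hx, -⟩ := key i hi
        rw [hx]; simp
      · intro i hi j hj h
        obtain ⟨x, hx, z, hz⟩ := key i hi
        obtain ⟨x', hx', z', hz'⟩ := key j hj
        rw [hx, hx'] at h
        injection h with h'
        subst h'
        have : (i, z) = (j, z') := hinj (by rw [hz, hz'])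
        exact (Prod.mk.injEq .. ▸ this : _ ∧ _).1
    rwa [card_image_of_injective _ (Option.some_injective _), card_univ, Fintype.card_fin] at h1
  have := Finset.card_add_card_compl T
  rw [Fintype.card_fin] at this
  omega

/-- **Construction 2.** If `F` is a connected bipartite graph with `p = p(F) ≤ s`, then for
all `n ≥ 2s + p`, `ex(n, {F, M_{s+1}}) ≥ (p − 1)(n + p − 2s) + ex(2s − 2p + 1, F)`. -/
theorem construction_two {V : Type*} [Fintype V] (F : SimpleGraph V)
    (hconn : F.Connected) (p s : ℕ)
    (hp : IsLeast {k : ℕ | ∃ A : Set V, twoColorClass F A ∧ A.ncard = k} p)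
    (hps : p ≤ s) :
    ∀ n : ℕ, 2 * s + p ≤ n →
      (p - 1) * (n + p - 2 * s) + exNum (2 * s - 2 * p + 1) (fun G => ¬ Contains G F) ≤
        exNum n (fun G => ¬ Contains G F ∧ ¬ Contains G (matchingGraph (s + 1))) := by
  intro n hn
  rcases Nat.eq_zero_or_pos p with hp0 | hp1
  · -- degenerate case: `p = 0`, so `F` is a single vertex and the LHS is `0`.
    subst hp0
    obtain ⟨A, hA, hA0⟩ := hp.1
    have hAe : A = ∅ := (Set.ncard_eq_zero (Set.toFinite A)).mp hA0
    have hnoadj : ∀ u v : V, ¬ F.Adj u v := fun u v =>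
      hA.2 u (by simp [hAe]) v (by simp [hAe])
    have hcont : ∀ G : SimpleGraph (Fin (2 * s - 2 * 0 + 1)), Contains G F := by
      intro G
      have hsub : ∀ x y : V, x = y := by
        intro u v
        obtain ⟨w⟩ := hconn.preconnected u v
        cases w with
        | nil => rfl
        | cons h _ => exact absurd h (hnoadj _ _)
      exact ⟨fun _ => ⟨0, by omega⟩, fun x y _ => hsub x y,
        fun a b hab => absurd hab (hnoadj a b)⟩
    rw [exNum_empty (fun G hG => hG (hcont G))]
    simp
  · -- main case: `p ≥ 1`.
    have hFedge : ∃ u v, F.Adj u v := by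
      by_contra h
      push_neg at h
      have h2 : twoColorClass F (∅ : Set V) := ⟨by simp, fun a _ b _ => h a b⟩
      have : p ≤ (0 : ℕ) := hp.2 ⟨∅, h2, Set.ncard_empty _⟩
      omega
    have hbot : ¬ Contains (⊥ : SimpleGraph (Fin (2 * s - 2 * p + 1))) F := by
      rintro ⟨f, -, hadj⟩
      obtain ⟨u, v, huv⟩ := hFedge
      exact hadj huv
    obtain ⟨Hg, hHfree, hHcard⟩ := exNum_exists (P := fun G => ¬ Contains G F) ⟨⊥, hbot⟩
    have habc : (p - 1) + (n + p - 2 * s) + (2 * s - 2 * p + 1) = n := by omega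
    let e : ((Fin (p - 1) ⊕ Fin (n + p - 2 * s)) ⊕ Fin (2 * s - 2 * p + 1)) ≃ Fin n :=
      ((Equiv.sumCongr finSumFinEquiv (Equiv.refl _)).trans finSumFinEquiv).trans
        (finCongr habc)
    set Gsum := (completeBipartiteGraph (Fin (p - 1)) (Fin (n + p - 2 * s))) ⊕g Hg with hGsum
    set Gfin := Gsum.map e.toEmbedding with hGfin
    have hiso : Gsum ≃g Gfin := SimpleGraph.Iso.map e Gsum
    have hfree : ¬ Contains Gfin F := by
      intro hcontains
      obtain ⟨f, hinj, hadj⟩ := contains_of_iso hiso hcontains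
      rcases hom_side hconn f hadj with hL | hR
      · apply not_contains_cbg F p hp (p - 1) (n + p - 2 * s) (by omega)
        refine ⟨fun v => (f v).getLeft (hL v), ?_, ?_⟩
        · intro u v h
          simp only at h
          have h1 : f u = Sum.inl ((f v).getLeft (hL v)) := by
            rw [← h]; exact (Sum.inl_getLeft _ (hL u)).symm
          exact hinj (h1.trans (Sum.inl_getLeft _ (hL v)))
        · intro u v huv
          have h2 := hadj huv
          rw [← Sum.inl_getLeft (f u) (hL u), ← Sum.inl_getLeft (f v) (hL v)] at h2
          exact h2
      · apply hHfree
        refine ⟨fun v => (f v).getRight (hR v), ?_, ?_⟩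
        · intro u v h
          simp only at h
          have h1 : f u = Sum.inr ((f v).getRight (hR v)) := by
            rw [← h]; exact (Sum.inr_getRight _ (hR u)).symm
          exact hinj (h1.trans (Sum.inr_getRight _ (hR v)))
        · intro u v huv
          have h2 := hadj huv
          rw [← Sum.inr_getRight (f u) (hR u), ← Sum.inr_getRight (f v) (hR v)] at h2
          exact h2
    have hmatch : ¬ Contains Gfin (matchingGraph (s + 1)) := by
      intro hcontains
      exact matching_free Hg (by omega) (contains_of_iso hiso hcontains)
    have hcount : edgeCount Gfin =
        (p - 1) * (n + p - 2 * s) + exNum (2 * s - 2 * p + 1) (fun G => ¬ Contains G F) := by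
      rw [← edgeCount_iso hiso, hGsum, edgeCount_sum, edgeCount_completeBipartite, hHcard]
    calc (p - 1) * (n + p - 2 * s) + exNum (2 * s - 2 * p + 1) (fun G => ¬ Contains G F)
        = edgeCount Gfin := hcount.symm
      _ ≤ _ := le_exNum ⟨hfree, hmatch⟩
end

section
/- Let P_{2ℓ} denote the path on 2ℓ vertices and let 2 ≤ ℓ ≤ s. Then for sufficiently large n, ex(n, {P_{2ℓ}, M_{s+1}}) = (ℓ − 1)(n − ℓ + 1) + C(ℓ−1, 2). -/
open SimpleGraph Finset

namespace EPE

variable {V : Type*}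

lemma contains_trans {U W X : Type*} {G : SimpleGraph U} {H : SimpleGraph W} {K : SimpleGraph X}
    (h1 : Contains G H) (h2 : Contains H K) : Contains G K := by
  obtain ⟨f, hf, hfa⟩ := h1; obtain ⟨g, hg, hga⟩ := h2
  exact ⟨f ∘ g, hf.comp hg, fun a b hab => hfa (hga hab)⟩

lemma contains_path_of_list {G : SimpleGraph V} {k : ℕ} (L : List V)
    (hN : L.Nodup) (hC : L.IsChain G.Adj) (hL : L.length = k) :
    Contains G (pathGraph k) := by
  refine ⟨fun i => L.get (Fin.cast hL.symm i), ?_, ?_⟩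
  · intro i j hij
    have := List.nodup_iff_injective_get.1 hN hij
    simpa [Fin.ext_iff] using this
  · intro a b hab
    rw [pathGraph_adj] at hab
    have key : ∀ i : ℕ, ∀ h : i < L.length - 1,
        G.Adj (L.get ⟨i, by omega⟩) (L.get ⟨i+1, by omega⟩) := by
      intro i h
      exact List.isChain_iff_getElem.1 hC i (by omega)
    rcases hab with h | h
    · have hb : (b : ℕ) < k := b.isLt
      have := key a.val (by omega)
      convert this using 2 <;> simp [Fin.ext_iff] <;> omega
    · have hb : (a : ℕ) < k := a.isLt
      have := (key b.val (by omega)).symm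
      convert this using 2 <;> simp [Fin.ext_iff] <;> omega

lemma matchingGraph_adj {t : ℕ} {x y : Fin t × Fin 2} :
    (matchingGraph t).Adj x y ↔ x ≠ y ∧ x.1 = y.1 := by
  constructor
  · rintro ⟨hne, h | h⟩
    · exact ⟨hne, h⟩
    · exact ⟨hne, h.symm⟩
  · rintro ⟨hne, h⟩; exact ⟨hne, Or.inl h⟩

lemma path_contains_matching (ℓ : ℕ) : Contains (pathGraph (2*ℓ)) (matchingGraph ℓ) := by
  refine ⟨fun p => ⟨2*p.1.val + p.2.val, by have := p.1.isLt; have := p.2.isLt; omega⟩, ?_, ?_⟩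
  · intro x y h
    simp only [Fin.mk.injEq] at h
    have h1 := x.1.isLt; have h2 := x.2.isLt; have h3 := y.1.isLt; have h4 := y.2.isLt
    have : x.1 = y.1 ∧ x.2 = y.2 := by
      constructor <;> [skip; skip] <;> apply Fin.ext <;> omega
    exact Prod.ext this.1 this.2
  · intro x y h
    rw [matchingGraph_adj] at h
    obtain ⟨hne, h1⟩ := h
    have h2 : x.2 ≠ y.2 := fun hc => hne (Prod.ext h1 hc)
    have h2' : (x.2 : ℕ) ≠ (y.2 : ℕ) := fun hc => h2 (Fin.ext hc)
    rw [pathGraph_adj]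
    have hx := x.2.isLt; have hy := y.2.isLt
    simp only []
    have h1' : (x.1 : ℕ) = (y.1 : ℕ) := by rw [h1]
    omega


lemma exists_cover [DecidableEq V] :
    ∀ (s : ℕ) (G : SimpleGraph V), ¬ Contains G (matchingGraph (s+1)) →
      ∃ B : Finset V, B.card ≤ 2*s ∧ ∀ ⦃x y⦄, G.Adj x y → x ∈ B ∨ y ∈ B := by
  intro s
  induction s with
  | zero =>
    intro G hG
    refine ⟨∅, by simp, fun x y hxy => absurd ?_ hG⟩
    refine ⟨fun p => if p.2 = 0 then x else y, ?_, ?_⟩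
    · intro p q hpq
      have hx := G.ne_of_adj hxy
      have hfst : p.1 = q.1 := Fin.ext (by omega)
      by_cases h1 : p.2 = 0 <;> by_cases h2 : q.2 = 0 <;> simp [h1, h2] at hpq
      · exact Prod.ext hfst (h1.trans h2.symm)
      · exact absurd hpq hx
      · exact absurd hpq.symm hx
      · have := p.2.isLt; have := q.2.isLt
        exact Prod.ext hfst (Fin.ext (by omega))
    · intro p q hpq
      rw [matchingGraph_adj] at hpq
      have h2 : p.2 ≠ q.2 := fun hc => hpq.1 (Prod.ext hpq.2 hc)
      by_cases h1 : p.2 = 0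
      · have : ¬ (q.2 = 0) := fun hc => h2 (h1.trans hc.symm)
        simp [h1, this]; exact hxy
      · have : q.2 = 0 := by omega
        simp [h1, this]; exact hxy.symm
  | succ s ih =>
    intro G hG
    by_cases hE : ∃ x y, G.Adj x y
    · obtain ⟨u, v, huv⟩ := hE
      let G' : SimpleGraph V :=
        { Adj := fun a b => G.Adj a b ∧ a ≠ u ∧ a ≠ v ∧ b ≠ u ∧ b ≠ v
          symm := ⟨fun a b ⟨h1, h2, h3, h4, h5⟩ => ⟨h1.symm, h4, h5, h2, h3⟩⟩
          loopless := ⟨fun a ⟨h1, _⟩ => G.irrefl h1⟩ }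
      have hG' : ¬ Contains G' (matchingGraph (s+1)) := by
        rintro ⟨f, hf, hfa⟩
        apply hG
        have hav : ∀ p, f p ≠ u ∧ f p ≠ v := by
          intro p
          have hadj : (matchingGraph (s+1)).Adj p (p.1, if p.2 = 0 then 1 else 0) := by
            rw [matchingGraph_adj]
            constructor
            · intro hc
              have := congrArg Prod.snd hc
              by_cases h : p.2 = 0 <;> simp [h] at this <;> omega
            · rfl
          have := hfa hadj
          exact ⟨this.2.1, this.2.2.1⟩
        refine ⟨fun p => if h : p.1.val < s+1 then f (⟨p.1.val, h⟩, p.2) else if p.2 = 0 then u else v, ?_, ?_⟩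
        · intro p q hpq
          have hne := G.ne_of_adj huv
          by_cases h1 : p.1.val < s+1 <;> by_cases h2 : q.1.val < s+1 <;>
            simp only [h1, h2, dif_pos, dif_neg, not_false_iff] at hpq
          · have := hf hpq
            have e1 := congrArg Prod.fst this
            have e2 := congrArg Prod.snd this
            simp only [Fin.mk.injEq] at e1
            exact Prod.ext (Fin.ext (by simpa using e1)) e2
          · exfalso; by_cases h : q.2 = 0 <;> simp [h] at hpq
            · exact (hav _).1 hpq
            · exact (hav _).2 hpq
          · exfalso; by_cases h : p.2 = 0 <;> simp [h] at hpq
            · exact (hav _).1 hpq.symm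
            · exact (hav _).2 hpq.symm
          · have hp1 : p.1.val = s+1 := by have := p.1.isLt; omega
            have hq1 : q.1.val = s+1 := by have := q.1.isLt; omega
            by_cases hp : p.2 = 0 <;> by_cases hq : q.2 = 0 <;> simp [hp, hq] at hpq ⊢
            · exact Prod.ext (Fin.ext (hp1.trans hq1.symm)) (hp.trans hq.symm)
            · exact absurd hpq hne
            · exact absurd hpq.symm hne
            · refine Prod.ext (Fin.ext (hp1.trans hq1.symm)) ?_
              have := p.2.isLt; have := q.2.isLt
              apply Fin.ext; omega
        · intro p q hpq
          rw [matchingGraph_adj] at hpq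
          obtain ⟨hne, heq⟩ := hpq
          have h2 : p.2 ≠ q.2 := fun hc => hne (Prod.ext heq hc)
          by_cases h1 : p.1.val < s+1
          · have h1' : q.1.val < s+1 := by rw [← heq]; exact h1
            simp only [h1, h1', dif_pos]
            have hadj : (matchingGraph (s+1)).Adj (⟨p.1.val, h1⟩, p.2) (⟨q.1.val, h1'⟩, q.2) := by
              rw [matchingGraph_adj]
              refine ⟨fun hc => ?_, by simp only [Fin.ext_iff]; exact congrArg Fin.val heq⟩
              · have := congrArg Prod.snd hc; exact h2 this
            exact (hfa hadj).1
          · have h1' : ¬ (q.1.val < s+1) := by rw [← heq]; exact h1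
            simp only [h1, h1', dif_neg, not_false_iff]
            by_cases hp : p.2 = 0
            · have : ¬ (q.2 = 0) := fun hc => h2 (hp.trans hc.symm)
              simp [hp, this]; exact huv
            · have hq : q.2 = 0 := by
                have := p.2.isLt; have := q.2.isLt
                by_contra hc
                exact h2 (Fin.ext (by omega))
              simp [hp, hq]; exact huv.symm
      obtain ⟨B', hB'c, hB'⟩ := ih G' hG'
      refine ⟨insert u (insert v B'), ?_, ?_⟩
      · calc (insert u (insert v B')).card ≤ (insert v B').card + 1 := Finset.card_insert_le _ _
          _ ≤ B'.card + 1 + 1 := by have := Finset.card_insert_le v B'; omega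
          _ ≤ 2*(s+1) := by omega
      · intro x y hxy
        by_cases hx : x = u ∨ x = v
        · left; rcases hx with h | h <;> simp [h]
        · by_cases hy : y = u ∨ y = v
          · right; rcases hy with h | h <;> simp [h]
          · push_neg at hx hy
            have : G'.Adj x y := ⟨hxy, hx.1, hx.2, hy.1, hy.2⟩
            rcases hB' this with h | h
            · left; simp [h]
            · right; simp [h]
    · push_neg at hE
      exact ⟨∅, by simp, fun x y hxy => absurd hxy (hE x y)⟩

def weave : List V → List V → List V
  | [], _ => []
  | x :: _, [] => [x]
  | x :: xs, a :: as => x :: a :: weave xs as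

lemma weave_length : ∀ (xs as : List V), as.length = xs.length →
    (weave xs as).length = 2 * xs.length
  | [], _, _ => by simp [weave]
  | x :: xs, a :: as, h => by
    simp only [weave, List.length_cons] at *
    rw [weave_length xs as (by omega)]; omega

lemma weave_mem : ∀ (xs as : List V) (y : V), y ∈ weave xs as → y ∈ xs ∨ y ∈ as
  | [], _, y, h => by simp [weave] at h
  | x :: xs, [], y, h => by simp [weave] at h; simp [h]
  | x :: xs, a :: as, y, h => by
    simp only [weave, List.mem_cons] at h ⊢
    rcases h with h | h | h
    · exact Or.inl (Or.inl h)
    · exact Or.inr (Or.inl h)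
    · rcases weave_mem xs as y h with h' | h'
      · exact Or.inl (Or.inr h')
      · exact Or.inr (Or.inr h')

lemma weave_nodup : ∀ (xs as : List V), xs.Nodup → as.Nodup →
    (∀ x ∈ xs, x ∉ as) → (weave xs as).Nodup
  | [], _, _, _, _ => by simp [weave]
  | x :: xs, [], _, _, _ => by simp [weave]
  | x :: xs, a :: as, hxs, has, hd => by
    simp only [weave, List.nodup_cons] at *
    refine ⟨?_, ?_, weave_nodup xs as hxs.2 has.2 (fun y hy => fun hc => hd y (by simp [hy]) (by simp [hc]))⟩
    · simp only [List.mem_cons]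
      push_neg
      refine ⟨fun hc => hd x (by simp) (by simp [hc]), fun hc => ?_⟩
      rcases weave_mem xs as x hc with h | h
      · exact hxs.1 h
      · exact hd x (by simp) (by simp [h])
    · intro hc
      rcases weave_mem xs as a hc with h | h
      · exact hd a (by simp [h]) (by simp)
      · exact has.1 h

lemma weave_chain {G : SimpleGraph V} : ∀ (xs as : List V) (c : V), as.length = xs.length →
    (∀ x ∈ xs, ∀ a ∈ as, G.Adj x a) → (∀ x ∈ xs, G.Adj c x) →
    List.IsChain G.Adj (c :: weave xs as)
  | [], as, c, h, _, _ => by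
    have : as = [] := List.length_eq_zero_iff.mp (by simpa using h)
    simp [this, weave]
  | x :: xs, a :: as, c, h, hcross, hc => by
    simp only [weave, List.isChain_cons_cons]
    refine ⟨hc x (by simp), hcross x (by simp) a (by simp), ?_⟩
    exact weave_chain xs as a (by simpa using h)
      (fun x' hx' a' ha' => hcross x' (by simp [hx']) a' (by simp [ha']))
      (fun x' hx' => (hcross x' (by simp [hx']) a (by simp)).symm)

lemma weave_chain' {G : SimpleGraph V} (xs as : List V) (h : as.length = xs.length)
    (hcross : ∀ x ∈ xs, ∀ a ∈ as, G.Adj x a) : List.IsChain G.Adj (weave xs as) := by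
  cases xs with
  | nil => simp [weave]
  | cons x xs =>
    cases as with
    | nil => simp at h
    | cons a as =>
      show List.IsChain G.Adj (x :: a :: weave xs as)
      show List.IsChain G.Adj (x :: a :: weave xs as)
      rw [List.isChain_cons_cons]
      exact ⟨hcross x (by simp) a (by simp),
        weave_chain xs as a (by simpa using h)
          (fun x' hx' a' ha' => hcross x' (by simp [hx']) a' (by simp [ha']))
          (fun x' hx' => (hcross x' (by simp [hx']) a (by simp)).symm)⟩

lemma weave_getLast? : ∀ (xs as : List V), as.length = xs.length → xs ≠ [] →
    (weave xs as).getLast? = as.getLast?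
  | [], _, _, h => absurd rfl h
  | x :: xs, a :: as, h, _ => by
    cases xs with
    | nil =>
      have : as = [] := List.length_eq_zero_iff.mp (by simpa using h)
      subst this; simp [weave]
    | cons x' xs' =>
      cases as with
      | nil => simp at h
      | cons a' as' =>
        have h' : (a' :: as').length = (x' :: xs').length := by simpa using h
        have ih := weave_getLast? (x' :: xs') (a' :: as') h' (by simp)
        simp only [weave] at ih ⊢
        simp only [List.getLast?_cons_cons] at ih ⊢
        exact ih


lemma contains_path_of_biclique {G : SimpleGraph V} {k : ℕ} {X T : Finset V}
    (hX : X.card = k) (hT : T.card = k) (hd : ∀ x ∈ X, x ∉ T)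
    (hadj : ∀ x ∈ X, ∀ t ∈ T, G.Adj x t) : Contains G (pathGraph (2*k)) := by
  have hlen : T.toList.length = X.toList.length := by
    rw [Finset.length_toList, Finset.length_toList, hX, hT]
  refine contains_path_of_list (weave X.toList T.toList) ?_ ?_ ?_
  · exact weave_nodup _ _ X.nodup_toList T.nodup_toList
      (fun x hx hc => hd x (Finset.mem_toList.mp hx) (Finset.mem_toList.mp hc))
  · exact weave_chain' _ _ hlen
      (fun x hx t ht => hadj x (Finset.mem_toList.mp hx) t (Finset.mem_toList.mp ht))
  · rw [weave_length _ _ hlen, Finset.length_toList, hX]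

lemma contains_path_struct [DecidableEq V] {G : SimpleGraph V} {a : ℕ} {S X : Finset V}
    {u z z2 : V}
    (hS : S.card = a) (hXcard : a + 2 ≤ X.card) (hXS : ∀ x ∈ X, x ∉ S)
    (hadj : ∀ x ∈ X, ∀ t ∈ S, G.Adj x t) (hu : u ∈ S) (hz : z ∉ S) (hz2 : z2 ∉ S)
    (hne : z ≠ z2) (h1 : G.Adj u z) (h2 : G.Adj z z2) :
    Contains G (pathGraph (2*a+2)) := by
  have ha : 1 ≤ a := by
    rw [← hS]; exact Finset.card_pos.mpr ⟨u, hu⟩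
  have hYc : a ≤ (X \ {z, z2}).card := by
    have h1 : (X \ ({z, z2} : Finset V)).card + ({z, z2} : Finset V).card ≥ X.card := by
      have := Finset.card_sdiff_add_card X ({z, z2} : Finset V)
      calc X.card ≤ (X ∪ {z, z2}).card := Finset.card_le_card Finset.subset_union_left
        _ = _ := by rw [← Finset.card_sdiff_add_card]
    have h2 : ({z, z2} : Finset V).card ≤ 2 := Finset.card_insert_le _ _ |>.trans (by simp)
    omega
  obtain ⟨Y, hYsub, hYcard⟩ := Finset.exists_subset_card_eq hYc
  have hYX : ∀ x ∈ Y, x ∈ X := fun x hx => (Finset.mem_sdiff.mp (hYsub hx)).1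
  have hYz : ∀ x ∈ Y, x ≠ z ∧ x ≠ z2 := by
    intro x hx
    have := (Finset.mem_sdiff.mp (hYsub hx)).2
    simp only [Finset.mem_insert, Finset.mem_singleton] at this
    exact ⟨fun hc => this (Or.inl hc), fun hc => this (Or.inr hc)⟩
  set asl : List V := (S.erase u).toList ++ [u] with hasl
  have haslmem : ∀ t ∈ asl, t ∈ S := by
    intro t ht
    rcases List.mem_append.mp ht with h | h
    · exact Finset.mem_of_mem_erase (Finset.mem_toList.mp h)
    · simp at h; rwa [h]
  have hasllen : asl.length = Y.toList.length := by
    rw [hasl, List.length_append, Finset.length_toList, Finset.length_toList,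
      Finset.card_erase_of_mem hu, hS, hYcard]
    simp; omega
  have haslnodup : asl.Nodup := by
    rw [hasl, List.nodup_append]
    refine ⟨(S.erase u).nodup_toList, by simp, ?_⟩
    intro t ht
    simp only [List.mem_singleton]
    intro b hb hc
    rw [hb] at hc
    rw [hc] at ht
    exact (Finset.notMem_erase u S) (Finset.mem_toList.mp ht)
  have hwnodup := weave_nodup Y.toList asl Y.nodup_toList haslnodup
    (fun x hx hc => hXS x (hYX x (Finset.mem_toList.mp hx)) (haslmem x hc))
  have hwchain := weave_chain' (G := G) Y.toList asl hasllen
    (fun x hx t ht => hadj x (hYX x (Finset.mem_toList.mp hx)) t (haslmem t ht))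
  have hwlast : (weave Y.toList asl).getLast? = some u := by
    rw [weave_getLast? _ _ hasllen ?_, hasl, List.getLast?_concat]
    rw [← List.length_pos_iff_ne_nil, Finset.length_toList, hYcard]; omega
  have hwlen : (weave Y.toList asl).length = 2*a := by
    rw [weave_length _ _ hasllen, Finset.length_toList, hYcard]
  refine contains_path_of_list (weave Y.toList asl ++ [z, z2]) ?_ ?_ ?_
  · rw [List.nodup_append]
    refine ⟨hwnodup, by simp [hne], ?_⟩
    intro y hy
    rcases weave_mem _ _ y hy with h | h
    · have h' := Finset.mem_toList.mp h
      simp only [List.mem_cons, List.mem_singleton]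
      intro b hb hc'
      rw [← hc'] at hb
      rcases hb with hc | hc | hc
      · exact (hYz y h').1 hc
      · exact (hYz y h').2 hc
      · simp at hc
    · have h' := haslmem y h
      simp only [List.mem_cons, List.mem_singleton]
      intro b hb hc'
      rw [← hc'] at hb
      rcases hb with hc | hc | hc
      · exact hz (hc ▸ h')
      · exact hz2 (hc ▸ h')
      · simp at hc
  · rw [List.isChain_append]
    refine ⟨hwchain, by simp [h2], ?_⟩
    intro x hx y hy
    rw [hwlast] at hx
    simp at hx hy
    rw [← hx, ← hy]
    exact h1
  · simp [hwlen]

variable [Fintype V] [DecidableEq V]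

def res (G : SimpleGraph V) (A : Finset V) : SimpleGraph V where
  Adj x y := G.Adj x y ∧ x ∈ A ∧ y ∈ A
  symm := ⟨fun x y ⟨h1, h2, h3⟩ => ⟨h1.symm, h3, h2⟩⟩
  loopless := ⟨fun x ⟨h1, _⟩ => G.irrefl h1⟩

variable (G : SimpleGraph V) [DecidableRel G.Adj]

instance resDec (A : Finset V) : DecidableRel (res G A).Adj :=
  fun x y => inferInstanceAs (Decidable (_ ∧ _ ∧ _))

@[simp] lemma res_adj {A : Finset V} {x y : V} :
    (res G A).Adj x y ↔ G.Adj x y ∧ x ∈ A ∧ y ∈ A := Iff.rfl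

def eIn (A : Finset V) : ℕ := (res G A).edgeFinset.card

lemma res_neighborFinset_subset (A : Finset V) (v : V) :
    (res G A).neighborFinset v ⊆ G.neighborFinset v ∩ A := by
  intro w hw
  rw [mem_neighborFinset] at hw
  rw [Finset.mem_inter, mem_neighborFinset]
  exact ⟨hw.1, hw.2.2⟩

lemma res_degree_le (A : Finset V) (v : V) :
    (res G A).degree v ≤ (G.neighborFinset v ∩ A).card := by
  rw [← card_neighborFinset_eq_degree]
  exact Finset.card_le_card (res_neighborFinset_subset G A v)

lemma res_degree_erase (A : Finset V) (v : V) :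
    (res G A).degree v ≤ (A.erase v).card := by
  rw [← card_neighborFinset_eq_degree]
  apply Finset.card_le_card
  intro w hw
  rw [mem_neighborFinset] at hw
  exact Finset.mem_erase.mpr ⟨fun hc => (res G A).irrefl (hc ▸ hw), hw.2.2⟩

lemma eIn_peel {A : Finset V} {v : V} (hv : v ∈ A) :
    eIn G A ≤ eIn G (A.erase v) + (res G A).degree v := by
  rw [eIn, eIn, ← card_incidenceFinset_eq_degree]
  refine le_trans (Finset.card_le_card ?_) (Finset.card_union_le _ _)
  intro e he
  induction e with
  | _ x y =>
    rw [mem_edgeFinset, mem_edgeSet] at he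
    obtain ⟨hadj, hx, hy⟩ := he
    rw [Finset.mem_union]
    by_cases hxv : x = v
    · right
      rw [mem_incidenceFinset]
      exact ⟨(mem_edgeSet _).mpr ⟨hadj, hx, hy⟩, by simp [hxv]⟩
    · by_cases hyv : y = v
      · right
        rw [mem_incidenceFinset]
        exact ⟨(mem_edgeSet _).mpr ⟨hadj, hx, hy⟩, by simp [hyv]⟩
      · left
        rw [mem_edgeFinset, mem_edgeSet]
        exact ⟨hadj, Finset.mem_erase.mpr ⟨hxv, hx⟩, Finset.mem_erase.mpr ⟨hyv, hy⟩⟩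

lemma eIn_split {A B : Finset V} (hBA : B ⊆ A)
    (hnc : ∀ x ∈ B, ∀ y ∈ A \ B, ¬ G.Adj x y) :
    eIn G A ≤ eIn G B + eIn G (A \ B) := by
  rw [eIn, eIn, eIn]
  refine le_trans (Finset.card_le_card ?_) (Finset.card_union_le _ _)
  intro e he
  induction e with
  | _ x y =>
    rw [mem_edgeFinset, mem_edgeSet] at he
    obtain ⟨hadj, hx, hy⟩ := he
    rw [Finset.mem_union, mem_edgeFinset, mem_edgeSet, mem_edgeFinset, mem_edgeSet]
    by_cases hxB : x ∈ B
    · by_cases hyB : y ∈ B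
      · exact Or.inl ⟨hadj, hxB, hyB⟩
      · exact absurd hadj (hnc x hxB y (Finset.mem_sdiff.mpr ⟨hy, hyB⟩))
    · by_cases hyB : y ∈ B
      · exact absurd hadj.symm (hnc y hyB x (Finset.mem_sdiff.mpr ⟨hx, hxB⟩))
      · exact Or.inr ⟨hadj, Finset.mem_sdiff.mpr ⟨hx, hxB⟩, Finset.mem_sdiff.mpr ⟨hy, hyB⟩⟩

lemma eIn_cover_decomp {A B : Finset V} (hBA : B ⊆ A) :
    eIn G A ≤ eIn G B + ∑ w ∈ A \ B, (res G A).degree w := by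
  rw [eIn, eIn]
  have hsub : (res G A).edgeFinset ⊆ (res G B).edgeFinset ∪
      (A \ B).biUnion (fun w => (res G A).incidenceFinset w) := by
    intro e he
    induction e with
    | _ x y =>
      rw [mem_edgeFinset, mem_edgeSet] at he
      obtain ⟨hadj, hx, hy⟩ := he
      rw [Finset.mem_union]
      by_cases hxB : x ∈ B
      · by_cases hyB : y ∈ B
        · exact Or.inl (by rw [mem_edgeFinset, mem_edgeSet]; exact ⟨hadj, hxB, hyB⟩)
        · refine Or.inr (Finset.mem_biUnion.mpr ⟨y, Finset.mem_sdiff.mpr ⟨hy, hyB⟩, ?_⟩)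
          rw [mem_incidenceFinset]
          exact ⟨(mem_edgeSet _).mpr ⟨hadj, hx, hy⟩, by simp⟩
      · refine Or.inr (Finset.mem_biUnion.mpr ⟨x, Finset.mem_sdiff.mpr ⟨hx, hxB⟩, ?_⟩)
        rw [mem_incidenceFinset]
        exact ⟨(mem_edgeSet _).mpr ⟨hadj, hx, hy⟩, by simp⟩
  refine le_trans (Finset.card_le_card hsub) (le_trans (Finset.card_union_le _ _) ?_)
  refine Nat.add_le_add_left (le_trans (Finset.card_biUnion_le) ?_) _
  refine Finset.sum_le_sum ?_
  intro w _
  rw [card_incidenceFinset_eq_degree]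

lemma eIn_le_choose (A : Finset V) : eIn G A ≤ A.card.choose 2 := by
  induction A using Finset.strongInduction with
  | _ A ih =>
    rcases Finset.eq_empty_or_nonempty A with rfl | ⟨v, hv⟩
    · have : eIn G ∅ = 0 := by
        rw [eIn, Finset.card_eq_zero]
        ext e
        induction e with
        | _ x y => simp [mem_edgeFinset, mem_edgeSet]
      omega
    · have h1 := eIn_peel G hv
      have h2 := ih (A.erase v) (Finset.erase_ssubset hv)
      have h3 := res_degree_erase G A v
      have hc : A.card = (A.erase v).card + 1 := by
        rw [Finset.card_erase_of_mem hv]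
        have : 1 ≤ A.card := Finset.card_pos.mpr ⟨v, hv⟩
        omega
      rw [hc, Nat.choose_succ_succ]
      have h4 : (A.erase v).card.choose 1 = (A.erase v).card := Nat.choose_one_right _
      have h5 : (A.erase v).card.choose (Nat.succ 1) = (A.erase v).card.choose 2 := rfl
      omega

lemma res_univ : res G (Finset.univ : Finset V) = G := by
  ext x y
  simp

lemma eIn_univ : eIn G (Finset.univ : Finset V) = G.edgeFinset.card := by
  have h : (res G (Finset.univ : Finset V)).edgeSet = G.edgeSet := by rw [res_univ]
  have h2 : (res G (Finset.univ : Finset V)).edgeFinset = G.edgeFinset := by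
    ext e; rw [mem_edgeFinset, mem_edgeFinset, h]
  rw [eIn, h2]

lemma res_degree_zero {A : Finset V} {v : V} (hv : v ∉ A) : (res G A).degree v = 0 := by
  rw [← card_neighborFinset_eq_degree, Finset.card_eq_zero]
  ext w
  simp only [mem_neighborFinset, res_adj, Finset.notMem_empty, iff_false]
  rintro ⟨_, h, _⟩
  exact hv h


def IsPathIn (G : SimpleGraph V) (A : Finset V) (L : List V) : Prop :=
  L.IsChain G.Adj ∧ L.Nodup ∧ ∀ v ∈ L, v ∈ A

lemma rotation {G : SimpleGraph V} [DecidableRel G.Adj] {A : Finset V} {k : ℕ} (hk : 2 ≤ k)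
    (hconn : ∀ u w, u ∈ A → w ∈ A → (res G A).Reachable u w)
    (hdeg : ∀ v ∈ A, k ≤ (res G A).degree v)
    (hA : 2 * k ≤ A.card) :
    ∃ L : List V, IsPathIn G A L ∧ L.length = 2 * k := by
  classical
  have hA0 : A.Nonempty := Finset.card_pos.mp (by omega)
  obtain ⟨v₀, hv₀⟩ := hA0
  have hVpos : 1 ≤ Fintype.card V := Fintype.card_pos_iff.mpr ⟨v₀⟩
  set PL : Finset ℕ := (Finset.range (Fintype.card V + 1)).filter
    (fun j => j ≠ 0 ∧ ∃ L : List V, IsPathIn G A L ∧ L.length = j) with hPL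
  have h1PL : 1 ∈ PL := by
    rw [hPL, Finset.mem_filter]
    exact ⟨Finset.mem_range.mpr (by omega), one_ne_zero,
      [v₀], ⟨by simp, by simp, by simpa using hv₀⟩, rfl⟩
  set m := PL.max' ⟨1, h1PL⟩ with hmdef
  have hmPL : m ∈ PL := PL.max'_mem ⟨1, h1PL⟩
  rw [hPL, Finset.mem_filter] at hmPL
  obtain ⟨hmrange, hm0, L₀, hL₀, hL₀len⟩ := hmPL
  have hmax : ∀ L : List V, IsPathIn G A L → L ≠ [] → L.length ≤ m := by
    intro L hLp hLne
    apply Finset.le_max'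
    rw [hPL, Finset.mem_filter]
    have hle : L.length ≤ Fintype.card V := List.Nodup.length_le_card hLp.2.1
    have hpos : 0 < L.length := List.length_pos_iff.mpr hLne
    exact ⟨Finset.mem_range.mpr (by omega), by omega, L, hLp, rfl⟩
  by_cases hbig : 2*k ≤ m
  · refine ⟨L₀.take (2*k), ⟨hL₀.1.take _, List.Nodup.sublist (List.take_sublist _ _) hL₀.2.1,
      fun v hv => hL₀.2.2 v (List.take_subset _ _ hv)⟩, ?_⟩
    rw [List.length_take]
    omega
  exfalso
  push_neg at hbig
  have hm1 : 1 ≤ m := by omega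
  have hLne : L₀ ≠ [] := by
    intro hc
    rw [hc] at hL₀len
    simp at hL₀len
    omega
  have hmemA : ∀ v ∈ L₀, v ∈ A := hL₀.2.2
  have hheadA : L₀.head hLne ∈ A := hmemA _ (List.head_mem hLne)
  have hlastA : L₀.getLast hLne ∈ A := hmemA _ (List.getLast_mem hLne)
  -- extension lemmas
  have hextend_head : ∀ w, (res G A).Adj w (L₀.head hLne) → w ∈ L₀ := by
    intro w hw
    by_contra hwL
    have hp : IsPathIn G A (w :: L₀) := by
      refine ⟨?_, List.nodup_cons.mpr ⟨hwL, hL₀.2.1⟩, ?_⟩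
      · rw [List.isChain_cons]
        refine ⟨?_, hL₀.1⟩
        intro y hy
        rw [List.head?_eq_head hLne] at hy
        simp only [Option.mem_def, Option.some.injEq] at hy
        rw [← hy]
        exact hw.1
      · intro v hv
        rcases List.mem_cons.mp hv with h | h
        · rw [h]; exact hw.2.1
        · exact hmemA v h
    have := hmax _ hp (by simp)
    simp only [List.length_cons] at this
    omega
  have hextend_last : ∀ w, (res G A).Adj w (L₀.getLast hLne) → w ∈ L₀ := by
    intro w hw
    by_contra hwL
    have hp : IsPathIn G A (L₀ ++ [w]) := by
      refine ⟨?_, ?_, ?_⟩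
      · rw [List.isChain_append]
        refine ⟨hL₀.1, by simp, ?_⟩
        intro x hx y hy
        rw [List.getLast?_eq_getLast hLne] at hx
        simp only [Option.mem_def, Option.some.injEq] at hx hy
        simp only [List.head?_cons, Option.some.injEq] at hy
        rw [← hx, ← hy]
        exact hw.1.symm
      · rw [List.nodup_append]
        exact ⟨hL₀.2.1, by simp, fun x hx => by
          simp only [List.mem_singleton]
          intro b hb hc; rw [hb] at hc; rw [hc] at hx; exact hwL hx⟩
      · intro v hv
        rcases List.mem_append.mp hv with h | h
        · exact hmemA v h
        · simp only [List.mem_singleton] at h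
          rw [h]; exact hw.2.1
    have := hmax _ hp (by simp)
    rw [List.length_append] at this
    simp at this
    omega
  -- m ≥ 2
  have hm2 : 2 ≤ m := by
    have hdh := hdeg (L₀.head hLne) hheadA
    have hpos : 0 < ((res G A).neighborFinset (L₀.head hLne)).card := by
      rw [card_neighborFinset_eq_degree]; omega
    obtain ⟨w, hw⟩ := Finset.card_pos.mp hpos
    rw [mem_neighborFinset] at hw
    have hwL : w ∈ L₀ := hextend_head w hw.symm
    have hwne : w ≠ L₀.head hLne := fun hc => (res G A).irrefl (hc ▸ hw.symm)
    have hsub : ({w, L₀.head hLne} : Finset V) ⊆ L₀.toFinset := by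
      intro y hy
      rcases Finset.mem_insert.mp hy with h | h
      · rw [h]; exact List.mem_toFinset.mpr hwL
      · rw [Finset.mem_singleton.mp h]; exact List.mem_toFinset.mpr (List.head_mem hLne)
    have hc2 : ({w, L₀.head hLne} : Finset V).card = 2 := Finset.card_pair hwne
    have := Finset.card_le_card hsub
    have := List.toFinset_card_le L₀
    omega
  -- index sets
  set NH := (res G A).neighborFinset (L₀.head hLne) with hNH
  set NZ := (res G A).neighborFinset (L₀.getLast hLne) with hNZ
  have hNHfacts : ∀ w ∈ NH, w ∈ L₀ ∧ 1 ≤ L₀.idxOf w ∧ L₀.idxOf w < m := by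
    intro w hw
    rw [hNH, mem_neighborFinset] at hw
    have hwL : w ∈ L₀ := hextend_head w hw.symm
    have hlt : L₀.idxOf w < L₀.length := List.idxOf_lt_length_iff.mpr hwL
    refine ⟨hwL, ?_, by omega⟩
    by_contra hc
    have h0 : L₀.idxOf w = 0 := by omega
    have h1 := List.idxOf_get hlt
    have h2 : (⟨L₀.idxOf w, hlt⟩ : Fin L₀.length) = ⟨0, by omega⟩ := by
      rw [Fin.ext_iff]; exact h0
    rw [h2, List.get_mk_zero] at h1
    exact (res G A).irrefl (h1 ▸ hw)
  have hNZfacts : ∀ w ∈ NZ, w ∈ L₀ ∧ L₀.idxOf w < m - 1 := by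
    intro w hw
    rw [hNZ, mem_neighborFinset] at hw
    have hwL : w ∈ L₀ := hextend_last w hw.symm
    have hlt : L₀.idxOf w < L₀.length := List.idxOf_lt_length_iff.mpr hwL
    refine ⟨hwL, ?_⟩
    by_contra hc
    have h0 : L₀.idxOf w = m - 1 := by omega
    have h1 := List.idxOf_get hlt
    have h2 : L₀.getLast hLne = L₀.get ⟨L₀.length - 1, by omega⟩ := List.getLast_eq_getElem _
    have h3 : (⟨L₀.idxOf w, hlt⟩ : Fin L₀.length) = ⟨L₀.length - 1, by omega⟩ := by
      simp only [Fin.mk.injEq]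
      omega
    have : w = L₀.getLast hLne := by rw [h2, ← h1, h3]
    exact (res G A).irrefl (this ▸ hw)
  set IA := NH.image (fun w => L₀.idxOf w - 1) with hIA
  set IB := NZ.image (fun w => L₀.idxOf w) with hIB
  have hIAcard : k ≤ IA.card := by
    rw [hIA, Finset.card_image_of_injOn]
    · rw [hNH, card_neighborFinset_eq_degree]; exact hdeg _ hheadA
    · intro x hx y hy hxy
      have hx' := hNHfacts x hx
      have hy' := hNHfacts y hy
      have hxy' : L₀.idxOf x - 1 = L₀.idxOf y - 1 := hxy
      have : L₀.idxOf x = L₀.idxOf y := by omega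
      exact (List.idxOf_inj hx'.1).mp this
  have hIBcard : k ≤ IB.card := by
    rw [hIB, Finset.card_image_of_injOn]
    · rw [hNZ, card_neighborFinset_eq_degree]; exact hdeg _ hlastA
    · intro x hx y hy hxy
      have hxy' : L₀.idxOf x = L₀.idxOf y := hxy
      exact (List.idxOf_inj (hNZfacts x hx).1).mp hxy' 
  have hIAsub : IA ⊆ Finset.range (m-1) := by
    rw [hIA]
    intro i hi
    obtain ⟨w, hw, rfl⟩ := Finset.mem_image.mp hi
    have := hNHfacts w hw
    exact Finset.mem_range.mpr (by omega)
  have hIBsub : IB ⊆ Finset.range (m-1) := by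
    rw [hIB]
    intro i hi
    obtain ⟨w, hw, rfl⟩ := Finset.mem_image.mp hi
    exact Finset.mem_range.mpr (hNZfacts w hw).2
  have hinter : (IA ∩ IB).Nonempty := by
    rw [← Finset.card_pos]
    have h1 : (IA ∪ IB).card ≤ m - 1 := by
      refine le_trans (Finset.card_le_card (Finset.union_subset hIAsub hIBsub)) ?_
      simp
    have := Finset.card_union_add_card_inter IA IB
    omega
  obtain ⟨i, hi⟩ := hinter
  obtain ⟨w₁, hw₁NH, hw₁i⟩ := Finset.mem_image.mp (Finset.mem_inter.mp hi).1
  obtain ⟨w₂, hw₂NZ, hw₂i⟩ := Finset.mem_image.mp (Finset.mem_inter.mp hi).2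
  have hw₁f := hNHfacts w₁ hw₁NH
  have hw₂f := hNZfacts w₂ hw₂NZ
  have hidx1 : L₀.idxOf w₁ = i + 1 := by omega
  have hidx2 : L₀.idxOf w₂ = i := by omega
  have hilt : i < m - 1 := by omega
  have hadj1 : G.Adj (L₀.head hLne) w₁ := by
    rw [hNH, mem_neighborFinset] at hw₁NH; exact hw₁NH.1
  have hadj2 : G.Adj (L₀.getLast hLne) w₂ := by
    rw [hNZ, mem_neighborFinset] at hw₂NZ; exact hw₂NZ.1
  -- get facts for w₁ w₂
  have hw₂get : L₀.get ⟨i, by omega⟩ = w₂ := by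
    have hlt₂ : L₀.idxOf w₂ < L₀.length := List.idxOf_lt_length_iff.mpr hw₂f.1
    have h1 := List.idxOf_get hlt₂
    have h2 : (⟨L₀.idxOf w₂, hlt₂⟩ : Fin L₀.length) = ⟨i, by omega⟩ := by
      simp only [Fin.mk.injEq]; omega
    rw [← h2]; exact h1
  have hw₁get : L₀.get ⟨i+1, by omega⟩ = w₁ := by
    have hlt₁ : L₀.idxOf w₁ < L₀.length := List.idxOf_lt_length_iff.mpr hw₁f.1
    have h1 := List.idxOf_get hlt₁
    have h2 : (⟨L₀.idxOf w₁, hlt₁⟩ : Fin L₀.length) = ⟨i+1, by omega⟩ := by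
      simp only [Fin.mk.injEq]; omega
    rw [← h2]; exact h1
  -- the cycle list
  set t : List V := L₀.take (i+1) with ht
  set d : List V := L₀.drop (i+1) with hd
  have htne : t ≠ [] := by
    rw [ht, ← List.length_pos_iff, List.length_take]
    omega
  have hdne : d ≠ [] := by
    rw [hd, ← List.length_pos_iff, List.length_drop]
    omega
  set K : List V := t ++ d.reverse with hK
  have hKperm : K.Perm L₀ := by
    have h1 : (t ++ d.reverse).Perm (t ++ d) := List.Perm.append_left t (List.reverse_perm d)
    have h2 : t ++ d = L₀ := by rw [ht, hd, List.take_append_drop]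
    rw [hK, ← h2]
    exact h1
  have hKnodup : K.Nodup := hKperm.nodup_iff.mpr hL₀.2.1
  have hKlen : K.length = m := by rw [hKperm.length_eq, hL₀len]
  have e1 : t.getLast? = some w₂ := by
    rw [ht, List.getLast?_eq_getElem?, List.length_take]
    have h3 : min (i+1) L₀.length - 1 = i := by omega
    rw [h3, List.getElem?_take_of_lt (by omega), List.getElem?_eq_getElem (by omega : i < L₀.length)]
    exact congrArg some hw₂get
  have e4 : t.head? = some (L₀.head hLne) := by
    rw [ht]
    have : (L₀.take (i+1)).head? = L₀.head? := by
      cases L₀ with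
      | nil => simp
      | cons x rest => simp [List.take_succ_cons]
    rw [this, List.head?_eq_head hLne]
  have e2 : d.reverse.head? = some (L₀.getLast hLne) := by
    rw [List.head?_reverse, hd, List.getLast?_drop, if_neg (by omega), List.getLast?_eq_getLast hLne]
  have e3 : d.reverse.getLast? = some w₁ := by
    rw [List.getLast?_reverse, hd, List.head?_drop]
    rw [List.getElem?_eq_getElem (by omega : i+1 < L₀.length)]
    exact congrArg some hw₁get
  have hKlast? : K.getLast? = some w₁ := by
    rw [hK, List.getLast?_append_of_ne_nil _ (by rwa [Ne, List.reverse_eq_nil_iff])]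
    exact e3
  have hKhead? : K.head? = some (L₀.head hLne) := by
    rw [hK, List.head?_append_of_ne_nil _ htne]
    exact e4
  have hKchain : K.IsChain G.Adj := by
    rw [hK, List.isChain_append]
    refine ⟨hL₀.1.take _, ?_, ?_⟩
    · rw [List.isChain_reverse]
      exact (hL₀.1.drop _).imp (fun a b hab => hab.symm)
    · intro x hx y hy
      rw [e1] at hx
      rw [e2] at hy
      simp only [Option.mem_def, Option.some.injEq] at hx hy
      rw [← hx, ← hy]
      exact hadj2.symm
  have hKcyc : G.Adj w₁ (L₀.head hLne) := hadj1.symm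
  have hKsubA : ∀ v ∈ K, v ∈ A := fun v hv => hmemA v (hKperm.mem_iff.mp hv)
  -- a vertex outside K
  have hout : ∃ u ∈ A, u ∉ K := by
    by_contra hc
    push_neg at hc
    have hsub : A ⊆ K.toFinset := fun v hv => List.mem_toFinset.mpr (hc v hv)
    have h1 := Finset.card_le_card hsub
    have h2 := List.toFinset_card_le K
    omega
  obtain ⟨u, huA, huK⟩ := hout
  have hheadK : L₀.head hLne ∈ K := List.mem_of_mem_head? (Option.mem_def.mpr hKhead?)
  obtain ⟨p⟩ := hconn u (L₀.head hLne) huA hheadA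
  obtain ⟨dt, hdtmem, hdt1, hdt2⟩ := p.exists_boundary_dart {x | x ∉ K} huK (by simp [hheadK])
  set w' := dt.toProd.1 with hw'
  set c := dt.toProd.2 with hc
  have hw'K : w' ∉ K := hdt1
  have hcK : c ∈ K := by simpa using hdt2
  have hdadj : (res G A).Adj w' c := dt.adj
  obtain ⟨P, Q, hPQ⟩ := List.append_of_mem hcK
  have hKchain' : List.IsChain G.Adj (P ++ c :: Q) := by rw [← hPQ]; exact hKchain
  obtain ⟨hcP, hcQ, hjunc⟩ := List.isChain_append.mp hKchain'
  have hlastCQ : (c :: Q).getLast? = some w₁ := by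
    rw [← hKlast?, hPQ, List.getLast?_append_of_ne_nil _ (by simp)]
  set L₁ : List V := w' :: ((c :: Q) ++ P) with hL₁
  have hpermK : ((c :: Q) ++ P).Perm K := by
    rw [hPQ]
    exact List.perm_append_comm
  have hp : IsPathIn G A L₁ := by
    refine ⟨?_, ?_, ?_⟩
    · rw [hL₁, List.isChain_cons]
      constructor
      · intro y hy
        rw [List.head?_append_of_ne_nil _ (by simp : (c :: Q) ≠ [])] at hy
        simp only [List.head?_cons, Option.mem_def, Option.some.injEq] at hy
        rw [← hy]
        exact hdadj.1
      · rw [List.isChain_append]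
        refine ⟨hcQ, hcP, ?_⟩
        intro x hx y hy
        cases P with
        | nil => simp at hy
        | cons p0 P' =>
          rw [hlastCQ] at hx
          have hyK : y = L₀.head hLne := by
            have hheadP : (p0 :: P').head? = some p0 := rfl
            have : K.head? = some p0 := by
              rw [hPQ, List.head?_append_of_ne_nil _ (by simp)]
              rfl
            rw [hKhead?] at this
            simp only [Option.some.injEq] at this
            simp only [List.head?_cons, Option.mem_def, Option.some.injEq] at hy
            rw [← hy, ← this]
          simp only [Option.mem_def, Option.some.injEq] at hx
          rw [← hx, hyK]
          exact hKcyc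
    · rw [hL₁, List.nodup_cons]
      refine ⟨fun hc' => hw'K (hpermK.mem_iff.mp hc'), hpermK.nodup_iff.mpr hKnodup⟩
    · intro v hv
      rw [hL₁, List.mem_cons] at hv
      rcases hv with h | h
      · rw [h]; exact hdadj.2.1
      · exact hKsubA v (hpermK.mem_iff.mp h)
  have hcon := hmax L₁ hp (by rw [hL₁]; simp)
  rw [hL₁, List.length_cons, hpermK.length_eq, hKlen] at hcon
  omega


lemma EGsoft (G : SimpleGraph V) [DecidableRel G.Adj] {k : ℕ} (hk : 2 ≤ k)
    (A : Finset V) (hfree : ∀ L : List V, IsPathIn G A L → L.length ≠ 2*k) :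
    eIn G A ≤ (k-1) * A.card := by
  classical
  induction A using Finset.strongInduction with
  | _ A ih =>
    by_cases hsmall : A.card ≤ 2*k - 1
    · refine le_trans (eIn_le_choose G A) ?_
      rw [Nat.choose_two_right]
      have h1 : A.card * (A.card - 1) ≤ A.card * (2*(k-1)) :=
        Nat.mul_le_mul_left _ (by omega)
      have h2 : A.card * (2*(k-1)) / 2 = (k-1) * A.card := by
        rw [show A.card * (2*(k-1)) = ((k-1) * A.card) * 2 by ring]
        exact Nat.mul_div_cancel _ (by norm_num)
      calc A.card * (A.card - 1) / 2 ≤ A.card * (2*(k-1)) / 2 := Nat.div_le_div_right h1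
        _ = (k-1) * A.card := h2
    · push_neg at hsmall
      have hbig : 2*k ≤ A.card := by omega
      by_cases hpeel : ∃ v ∈ A, (res G A).degree v ≤ k-1
      · obtain ⟨v, hvA, hvdeg⟩ := hpeel
        have h1 := eIn_peel G hvA
        have h2 := ih (A.erase v) (Finset.erase_ssubset hvA)
          (fun L hL => hfree L ⟨hL.1, hL.2.1, fun w hw => Finset.mem_of_mem_erase (hL.2.2 w hw)⟩)
        have h3 : (A.erase v).card = A.card - 1 := Finset.card_erase_of_mem hvA
        have h4 : 1 ≤ A.card := by omega
        calc eIn G A ≤ eIn G (A.erase v) + (res G A).degree v := h1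
          _ ≤ (k-1) * (A.card - 1) + (k-1) := by rw [← h3]; omega
          _ = (k-1) * A.card := by
              conv_rhs => rw [← Nat.sub_add_cancel h4]
              rw [mul_add, mul_one]
      · push_neg at hpeel
        have hdeg : ∀ v ∈ A, k ≤ (res G A).degree v := by
          intro v hv
          have := hpeel v hv
          omega
        have hAne : A.Nonempty := Finset.card_pos.mp (by omega)
        obtain ⟨v₁, hv₁⟩ := hAne
        set C := A.filter (fun w => (res G A).Reachable v₁ w) with hC
        have hCA : C ⊆ A := Finset.filter_subset _ _
        have hv₁C : v₁ ∈ C := by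
          rw [hC, Finset.mem_filter]
          exact ⟨hv₁, Reachable.refl v₁⟩
        by_cases hconn : C = A
        · have hreach : ∀ u w, u ∈ A → w ∈ A → (res G A).Reachable u w := by
            intro u w hu hw
            rw [← hconn, hC, Finset.mem_filter] at hu hw
            exact hu.2.symm.trans hw.2
          obtain ⟨L, hL, hLlen⟩ := rotation hk hreach hdeg hbig
          exact absurd hLlen (hfree L hL)
        · have hCss : C ⊂ A := Finset.ssubset_iff_subset_ne.mpr ⟨hCA, hconn⟩
          have hACss : A \ C ⊂ A := by
            refine Finset.sdiff_ssubset ?_ ⟨v₁, hv₁C⟩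
            exact hCA
          have hnc : ∀ x ∈ C, ∀ y ∈ A \ C, ¬ G.Adj x y := by
            intro x hx y hy hadj
            rw [hC, Finset.mem_filter] at hx
            rw [Finset.mem_sdiff] at hy
            apply hy.2
            rw [hC, Finset.mem_filter]
            refine ⟨hy.1, hx.2.trans (Adj.reachable ⟨hadj, hx.1, hy.1⟩)⟩
          have h1 := eIn_split G hCA hnc
          have h2 := ih C hCss
            (fun L hL => hfree L ⟨hL.1, hL.2.1, fun w hw => hCA (hL.2.2 w hw)⟩)
          have h3 := ih (A \ C) hACss
            (fun L hL => hfree L ⟨hL.1, hL.2.1, fun w hw => (Finset.mem_sdiff.mp (hL.2.2 w hw)).1⟩)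
          have h4 : (A \ C).card = A.card - C.card := Finset.card_sdiff_of_subset hCA
          have h5 : C.card ≤ A.card := Finset.card_le_card hCA
          calc eIn G A ≤ eIn G C + eIn G (A \ C) := h1
            _ ≤ (k-1) * C.card + (k-1) * (A \ C).card := by omega
            _ = (k-1) * (C.card + (A \ C).card) := by ring
            _ = (k-1) * A.card := by rw [h4]; congr 1; omega

def N0 (ℓ s : ℕ) : ℕ :=
  Nat.choose (2*s) 2 + 2*s*((ℓ-1)*Nat.choose (2*s) ℓ) + (ℓ-1)*(ℓ*Nat.choose (2*s) (ℓ-1))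
    + ℓ*ℓ + 2*ℓ + 2*s + 2

theorem upper {n ℓ s : ℕ} (hl : 2 ≤ ℓ) (hls : ℓ ≤ s) (hn : N0 ℓ s ≤ n)
    (G : SimpleGraph (Fin n)) [DecidableRel G.Adj]
    (hP : ¬ Contains G (pathGraph (2*ℓ)))
    (hM : ¬ Contains G (matchingGraph (s+1))) :
    G.edgeFinset.card ≤ (ℓ-1) * (n - ℓ + 1) + Nat.choose (ℓ-1) 2 := by
  classical
  have hcard : Fintype.card (Fin n) = n := Fintype.card_fin n
  have hnl : ℓ + 1 ≤ n := by
    have : ℓ*ℓ + 2*ℓ ≤ N0 ℓ s := by rw [N0]; omega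
    omega
  obtain ⟨a, ha⟩ : ∃ a, a = ℓ - 1 := ⟨ℓ - 1, rfl⟩
  have hfree : ∀ (A : Finset (Fin n)) (L : List (Fin n)), IsPathIn G A L → L.length ≠ 2*ℓ := by
    intro A L hL hc
    exact hP (contains_path_of_list L hL.2.1 hL.1 hc)
  -- target form
  have htarget : (ℓ-1) * (n - ℓ + 1) + Nat.choose (ℓ-1) 2 = a * (n - a) + Nat.choose a 2 := by
    rw [ha]
    congr 2
    omega
  rw [htarget]
  by_cases hpop : ∃ S : Finset (Fin n), S.card = a ∧
      ℓ + 1 ≤ (univ.filter (fun v => v ∉ S ∧ G.neighborFinset v = S)).card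
  · -- CASE A : popular class exists
    obtain ⟨S, hScard, hXcard⟩ := hpop
    set X := univ.filter (fun v => v ∉ S ∧ G.neighborFinset v = S) with hX
    have hXS : ∀ x ∈ X, x ∉ S := by
      intro x hx
      exact ((Finset.mem_filter.mp hx).2).1
    have hXadj : ∀ x ∈ X, ∀ t ∈ S, G.Adj x t := by
      intro x hx t ht
      have := ((Finset.mem_filter.mp hx).2).2
      rw [← mem_neighborFinset, this]
      exact ht
    have hstruct : ∀ u z z2 : Fin n, u ∈ S → z ∉ S → z2 ∉ S → G.Adj u z → G.Adj z z2 → False := by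
      intro u z z2 hu hz hz2 h1 h2
      have hcont := contains_path_struct hScard (by omega : a + 2 ≤ X.card) hXS hXadj hu hz hz2
        (G.ne_of_adj h2) h1 h2
      have h2a : 2*a+2 = 2*ℓ := by omega
      rw [h2a] at hcont
      exact hP hcont
    set A₁ := univ.filter (fun z => z ∉ S ∧ ∃ u ∈ S, G.Adj u z) with hA₁
    have hA₁nb : ∀ z ∈ A₁, G.neighborFinset z ⊆ S := by
      intro z hz y hy
      rw [mem_neighborFinset] at hy
      obtain ⟨-, hzS, u, huS, huz⟩ := Finset.mem_filter.mp hz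
      by_contra hyS
      exact hstruct u z y huS hzS hyS huz hy
    have hSA₁ : S ⊆ S ∪ A₁ := Finset.subset_union_left
    -- no edges from S ∪ A₁ to the rest
    have hnc : ∀ x ∈ S ∪ A₁, ∀ y ∈ univ \ (S ∪ A₁), ¬ G.Adj x y := by
      intro x hx y hy hadj
      rw [Finset.mem_sdiff] at hy
      have hyS : y ∉ S := fun hc => hy.2 (Finset.mem_union_left _ hc)
      have hyA₁ : y ∉ A₁ := fun hc => hy.2 (Finset.mem_union_right _ hc)
      rcases Finset.mem_union.mp hx with hxS | hxA₁
      · exact hyA₁ (Finset.mem_filter.mpr ⟨Finset.mem_univ y, hyS, x, hxS, hadj⟩)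
      · exact hyS (hA₁nb x hxA₁ (by rw [mem_neighborFinset]; exact hadj))
    have hsplit := eIn_split G (Finset.subset_univ (S ∪ A₁)) hnc
    have hdecomp := eIn_cover_decomp G hSA₁
    have hdegA₁ : ∀ w ∈ (S ∪ A₁) \ S, (res G (S ∪ A₁)).degree w ≤ a := by
      intro w hw
      rw [Finset.mem_sdiff, Finset.mem_union] at hw
      have hwA₁ : w ∈ A₁ := by tauto
      refine le_trans (res_degree_le G _ w) ?_
      rw [← hScard]
      refine Finset.card_le_card ?_
      intro y hy
      exact hA₁nb w hwA₁ (Finset.mem_inter.mp hy).1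
    have hcards1 : ((S ∪ A₁) \ S).card = (S ∪ A₁).card - a := by
      rw [Finset.card_sdiff_of_subset hSA₁, hScard]
    have hsum : ∑ w ∈ (S ∪ A₁) \ S, (res G (S ∪ A₁)).degree w ≤ a * ((S ∪ A₁).card - a) := by
      calc ∑ w ∈ (S ∪ A₁) \ S, (res G (S ∪ A₁)).degree w
          ≤ ∑ _w ∈ (S ∪ A₁) \ S, a := Finset.sum_le_sum hdegA₁
        _ = ((S ∪ A₁) \ S).card * a := by rw [Finset.sum_const, smul_eq_mul]
        _ = a * ((S ∪ A₁).card - a) := by rw [hcards1, mul_comm]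
    have hR := EGsoft G hl (univ \ (S ∪ A₁)) (fun L hL => hfree _ L hL)
    rw [← ha] at hR
    have huniv : (univ : Finset (Fin n)).card = n := by rw [Finset.card_univ, hcard]
    have hcards2 : (univ \ (S ∪ A₁)).card = n - (S ∪ A₁).card := by
      rw [Finset.card_sdiff_of_subset (Finset.subset_univ _), huniv]
    rw [hcards2] at hR
    have hSbound : eIn G S ≤ Nat.choose a 2 := by
      have := eIn_le_choose G S
      rwa [hScard] at this
    have hq : a ≤ (S ∪ A₁).card := by rw [← hScard]; exact Finset.card_le_card hSA₁
    have hqn : (S ∪ A₁).card ≤ n :=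
      le_trans (Finset.card_le_card (Finset.subset_univ _)) (le_of_eq huniv)
    have hkey : a * ((S ∪ A₁).card - a) + a * (n - (S ∪ A₁).card) = a * (n - a) := by
      rw [← Nat.mul_add]
      congr 1
      omega
    have heq : G.edgeFinset.card = eIn G univ := (eIn_univ G).symm
    omega
  · -- CASE B : no popular class
    push_neg at hpop
    obtain ⟨B, hBcard, hBcover⟩ := exists_cover s G hM
    set W := (univ : Finset (Fin n)) \ B with hW
    have hWnb : ∀ w ∈ W, G.neighborFinset w ⊆ B := by
      intro w hw y hy
      rw [mem_neighborFinset] at hy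
      rcases hBcover hy with h | h
      · exact absurd h (by rw [hW, Finset.mem_sdiff] at hw; exact hw.2)
      · exact h
    have hWdeg2s : ∀ w ∈ W, G.degree w ≤ 2*s := by
      intro w hw
      rw [← card_neighborFinset_eq_degree]
      exact le_trans (Finset.card_le_card (hWnb w hw)) hBcard
    -- high degree vertices
    set Whi := W.filter (fun w => ℓ ≤ G.degree w) with hWhi
    have hHi : Whi.card ≤ (ℓ-1) * Nat.choose (2*s) ℓ := by
      by_contra hc
      push_neg at hc
      set c : Fin n → Finset (Fin n) := fun w =>
        if h : ℓ ≤ (G.neighborFinset w).card then (Finset.exists_subset_card_eq h).choose else ∅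
        with hcdef
      have hcspec : ∀ w ∈ Whi, c w ⊆ G.neighborFinset w ∧ (c w).card = ℓ := by
        intro w hw
        have hdeg : ℓ ≤ (G.neighborFinset w).card := by
          rw [card_neighborFinset_eq_degree]
          exact (Finset.mem_filter.mp hw).2
        rw [hcdef]
        simp only [hdeg, dif_pos]
        obtain ⟨h1, h2⟩ := (Finset.exists_subset_card_eq hdeg).choose_spec
        exact ⟨h1, h2⟩
      have hmaps : ∀ w ∈ Whi, c w ∈ B.powersetCard ℓ := by
        intro w hw
        rw [Finset.mem_powersetCard]
        have hWmem : w ∈ W := (Finset.mem_filter.mp hw).1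
        exact ⟨le_trans (hcspec w hw).1 (hWnb w hWmem), (hcspec w hw).2⟩
      have hlt : (B.powersetCard ℓ).card * (ℓ-1) < Whi.card := by
        have h1 : (B.powersetCard ℓ).card = Nat.choose B.card ℓ := Finset.card_powersetCard _ _
        have h2 : Nat.choose B.card ℓ ≤ Nat.choose (2*s) ℓ := Nat.choose_le_choose _ hBcard
        have h3 : (B.powersetCard ℓ).card * (ℓ-1) ≤ Nat.choose (2*s) ℓ * (ℓ-1) := by
          rw [h1]; exact Nat.mul_le_mul_right _ h2
        have h4 : Nat.choose (2*s) ℓ * (ℓ-1) = (ℓ-1) * Nat.choose (2*s) ℓ := mul_comm _ _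
        omega
      obtain ⟨T, hT, hTfib⟩ := Finset.exists_lt_card_fiber_of_mul_lt_card_of_maps_to hmaps hlt
      have hTcard : T.card = ℓ := (Finset.mem_powersetCard.mp hT).2
      have hTB : T ⊆ B := (Finset.mem_powersetCard.mp hT).1
      obtain ⟨X', hX'sub, hX'card⟩ := Finset.exists_subset_card_eq
        (show ℓ ≤ (Whi.filter (fun x => c x = T)).card by omega)
      refine hP (contains_path_of_biclique hX'card hTcard ?_ ?_)
      · intro x hx
        have hxW : x ∈ W := (Finset.mem_filter.mp (Finset.mem_filter.mp (hX'sub hx)).1).1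
        rw [hW, Finset.mem_sdiff] at hxW
        intro hc'
        exact hxW.2 (hTB hc')
      · intro x hx t ht
        obtain ⟨hxWhi, hxc⟩ := Finset.mem_filter.mp (hX'sub hx)
        have := (hcspec x hxWhi).1
        rw [hxc] at this
        have := this ht
        rwa [mem_neighborFinset] at this
    -- mid degree vertices
    set Wmid := W.filter (fun w => G.degree w = ℓ - 1) with hWmid
    have hMid : Wmid.card ≤ ℓ * Nat.choose (2*s) (ℓ-1) := by
      by_contra hc
      push_neg at hc
      have hmaps : ∀ w ∈ Wmid, G.neighborFinset w ∈ B.powersetCard (ℓ-1) := by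
        intro w hw
        rw [Finset.mem_powersetCard]
        refine ⟨hWnb w (Finset.mem_filter.mp hw).1, ?_⟩
        rw [card_neighborFinset_eq_degree]
        exact (Finset.mem_filter.mp hw).2
      have hlt : (B.powersetCard (ℓ-1)).card * ℓ < Wmid.card := by
        have h1 : (B.powersetCard (ℓ-1)).card = Nat.choose B.card (ℓ-1) :=
          Finset.card_powersetCard _ _
        have h2 : Nat.choose B.card (ℓ-1) ≤ Nat.choose (2*s) (ℓ-1) :=
          Nat.choose_le_choose _ hBcard
        have h3 : (B.powersetCard (ℓ-1)).card * ℓ ≤ Nat.choose (2*s) (ℓ-1) * ℓ := by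
          rw [h1]; exact Nat.mul_le_mul_right _ h2
        have h4 : Nat.choose (2*s) (ℓ-1) * ℓ = ℓ * Nat.choose (2*s) (ℓ-1) := mul_comm _ _
        omega
      obtain ⟨S, hS, hSfib⟩ := Finset.exists_lt_card_fiber_of_mul_lt_card_of_maps_to hmaps hlt
      have hScard : S.card = ℓ - 1 := (Finset.mem_powersetCard.mp hS).2
      have := hpop S (by rw [hScard, ha])
      have hsub : Wmid.filter (fun x => G.neighborFinset x = S) ⊆
          univ.filter (fun v => v ∉ S ∧ G.neighborFinset v = S) := by
        intro x hx
        obtain ⟨hxmid, hxN⟩ := Finset.mem_filter.mp hx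
        rw [Finset.mem_filter]
        refine ⟨Finset.mem_univ x, ?_, hxN⟩
        intro hxS
        rw [← hxN, mem_neighborFinset] at hxS
        exact G.irrefl hxS
      have := Finset.card_le_card hsub
      omega
    -- sum of degrees over W
    have hsumW : ∑ w ∈ W, G.degree w ≤
        2*s * Whi.card + (ℓ-1) * Wmid.card + (ℓ-2) * W.card := by
      have hsplit1 : ∑ w ∈ Whi, G.degree w
          + ∑ w ∈ W.filter (fun w => ¬ ℓ ≤ G.degree w), G.degree w
          = ∑ w ∈ W, G.degree w := by
        rw [hWhi]
        exact Finset.sum_filter_add_sum_filter_not W _ _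
      have h1 : ∑ w ∈ Whi, G.degree w ≤ 2*s * Whi.card := by
        calc ∑ w ∈ Whi, G.degree w ≤ ∑ _w ∈ Whi, 2*s :=
              Finset.sum_le_sum (fun w hw => hWdeg2s w (Finset.mem_filter.mp hw).1)
          _ = Whi.card * (2*s) := by rw [Finset.sum_const, smul_eq_mul]
          _ = 2*s * Whi.card := mul_comm _ _
      set Wlo := W.filter (fun w => ¬ ℓ ≤ G.degree w) with hWlo
      have hsplit1' : ∑ w ∈ Wlo, G.degree w
          = ∑ w ∈ W.filter (fun w => ¬ ℓ ≤ G.degree w), G.degree w := by rw [hWlo]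
      have hsplit2 : ∑ w ∈ Wlo.filter (fun w => G.degree w = ℓ - 1), G.degree w
          + ∑ w ∈ Wlo.filter (fun w => ¬ G.degree w = ℓ - 1), G.degree w
          = ∑ w ∈ Wlo, G.degree w :=
        Finset.sum_filter_add_sum_filter_not Wlo _ _
      have h2 : ∑ w ∈ Wlo.filter (fun w => G.degree w = ℓ - 1), G.degree w ≤
          (ℓ-1) * Wmid.card := by
        have hss : Wlo.filter (fun w => G.degree w = ℓ - 1) ⊆ Wmid := by
          intro x hx
          obtain ⟨hx1, hx2⟩ := Finset.mem_filter.mp hx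
          exact Finset.mem_filter.mpr ⟨(Finset.mem_filter.mp hx1).1, hx2⟩
        calc ∑ w ∈ Wlo.filter (fun w => G.degree w = ℓ - 1), G.degree w
            ≤ ∑ _w ∈ Wlo.filter (fun w => G.degree w = ℓ - 1), (ℓ-1) :=
              Finset.sum_le_sum (fun w hw => le_of_eq (Finset.mem_filter.mp hw).2)
          _ = (Wlo.filter (fun w => G.degree w = ℓ - 1)).card * (ℓ-1) := by
              rw [Finset.sum_const, smul_eq_mul]
          _ ≤ Wmid.card * (ℓ-1) := Nat.mul_le_mul_right _ (Finset.card_le_card hss)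
          _ = (ℓ-1) * Wmid.card := mul_comm _ _
      have h3 : ∑ w ∈ Wlo.filter (fun w => ¬ G.degree w = ℓ - 1), G.degree w ≤
          (ℓ-2) * W.card := by
        have hbound : ∀ w ∈ Wlo.filter (fun w => ¬ G.degree w = ℓ - 1), G.degree w ≤ ℓ-2 := by
          intro w hw
          obtain ⟨hw1, hw2⟩ := Finset.mem_filter.mp hw
          have := (Finset.mem_filter.mp hw1).2
          omega
        have hss : Wlo.filter (fun w => ¬ G.degree w = ℓ - 1) ⊆ W :=
          le_trans (Finset.filter_subset _ _) (Finset.filter_subset _ _)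
        calc ∑ w ∈ Wlo.filter (fun w => ¬ G.degree w = ℓ - 1), G.degree w
            ≤ ∑ _w ∈ Wlo.filter (fun w => ¬ G.degree w = ℓ - 1), (ℓ-2) :=
              Finset.sum_le_sum hbound
          _ = (Wlo.filter (fun w => ¬ G.degree w = ℓ - 1)).card * (ℓ-2) := by
              rw [Finset.sum_const, smul_eq_mul]
          _ ≤ W.card * (ℓ-2) := Nat.mul_le_mul_right _ (Finset.card_le_card hss)
          _ = (ℓ-2) * W.card := mul_comm _ _
      omega
    -- total count
    have hdecomp := eIn_cover_decomp G (Finset.subset_univ B)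
    have hdegres : ∀ w ∈ univ \ B, (res G univ).degree w ≤ G.degree w := by
      intro w _
      refine le_trans (res_degree_le G _ w) ?_
      rw [Finset.inter_univ, card_neighborFinset_eq_degree]
    have hsumres : ∑ w ∈ univ \ B, (res G univ).degree w ≤ ∑ w ∈ W, G.degree w := by
      rw [hW]
      exact Finset.sum_le_sum hdegres
    have hBbound : eIn G B ≤ Nat.choose (2*s) 2 := by
      refine le_trans (eIn_le_choose G B) (Nat.choose_le_choose _ hBcard)
    have heq : G.edgeFinset.card = eIn G univ := (eIn_univ G).symm
    have huniv : (univ : Finset (Fin n)).card = n := by rw [Finset.card_univ, hcard]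
    have hWcard : W.card ≤ n :=
      le_trans (Finset.card_le_card (Finset.subset_univ _)) (le_of_eq huniv)
    -- final arithmetic
    have hfin1 : G.edgeFinset.card ≤ Nat.choose (2*s) 2 + 2*s*((ℓ-1) * Nat.choose (2*s) ℓ)
        + (ℓ-1)*(ℓ * Nat.choose (2*s) (ℓ-1)) + (ℓ-2) * n := by
      have e1 : 2*s * Whi.card ≤ 2*s*((ℓ-1) * Nat.choose (2*s) ℓ) :=
        Nat.mul_le_mul_left _ hHi
      have e2 : (ℓ-1) * Wmid.card ≤ (ℓ-1)*(ℓ * Nat.choose (2*s) (ℓ-1)) :=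
        Nat.mul_le_mul_left _ hMid
      have e3 : (ℓ-2) * W.card ≤ (ℓ-2) * n := Nat.mul_le_mul_left _ hWcard
      omega
    -- compare with target
    have harith : Nat.choose (2*s) 2 + 2*s*((ℓ-1) * Nat.choose (2*s) ℓ)
        + (ℓ-1)*(ℓ * Nat.choose (2*s) (ℓ-1)) + (ℓ-2) * n ≤ a * (n - a) + Nat.choose a 2 := by
      rw [N0] at hn
      set K := Nat.choose (2*s) 2 + 2*s*((ℓ-1) * Nat.choose (2*s) ℓ)
        + (ℓ-1)*(ℓ * Nat.choose (2*s) (ℓ-1)) with hK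
      have haa : (a-1)*a ≤ ℓ*ℓ := Nat.mul_le_mul (by omega) (by omega)
      have hm0 : a + (K + (a-1)*a + 2) ≤ n := by omega
      set m := n - a with hmdef
      have h0 : n = m + a := by omega
      have h1 : (ℓ-2) * n = (ℓ-2)*m + (ℓ-2)*a := by
        conv_lhs => rw [h0]
        rw [Nat.mul_add]
      have h2 : a * m = (ℓ-2)*m + m := by
        have he : a = (ℓ-2)+1 := by omega
        rw [he, Nat.add_mul, one_mul]
      have h3 : K + (ℓ-2)*a ≤ m := by
        have he : ℓ-2 = a-1 := by omega
        rw [he]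
        omega
      omega
    omega

lemma edgeCount_eq_card {V : Type*} [Fintype V] (G : SimpleGraph V) [DecidableRel G.Adj] :
    edgeCount G = G.edgeFinset.card := by
  rw [edgeCount, ← coe_edgeFinset, Set.ncard_coe_finset]

def starG (n a : ℕ) : SimpleGraph (Fin n) where
  Adj x y := x ≠ y ∧ (x.val < a ∨ y.val < a)
  symm := by
    constructor
    intro x y ⟨h1, h2⟩
    exact ⟨h1.symm, h2.symm⟩
  loopless := ⟨fun x ⟨h1, _⟩ => h1 rfl⟩

instance (n a : ℕ) : DecidableRel (starG n a).Adj :=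
  fun _ _ => inferInstanceAs (Decidable (_ ∧ _))

lemma starG_hub_card {n a : ℕ} (h : a ≤ n) :
    ((univ : Finset (Fin n)).filter (fun x => x.val < a)).card = a := by
  have himg : ((univ : Finset (Fin n)).filter (fun x => x.val < a)).image (Fin.val) =
      Finset.range a := by
    ext m
    simp only [Finset.mem_image, Finset.mem_filter, Finset.mem_univ, true_and, Finset.mem_range]
    constructor
    · rintro ⟨x, hx, rfl⟩; exact hx
    · intro hm
      exact ⟨⟨m, by omega⟩, hm, rfl⟩
  have hinj : Set.InjOn Fin.val (((univ : Finset (Fin n)).filter (fun x => x.val < a)) : Set (Fin n)) :=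
    fun x _ y _ hxy => Fin.ext hxy
  rw [← Finset.card_image_of_injOn hinj, himg, Finset.card_range]

lemma starG_no_matching {n a k : ℕ} (hk : a + 1 ≤ k) (han : a ≤ n) :
    ¬ Contains (starG n a) (matchingGraph k) := by
  rintro ⟨f, hf, hfa⟩
  set Hub := (univ : Finset (Fin n)).filter (fun x => x.val < a) with hHub
  have hadj : ∀ i : Fin k, (starG n a).Adj (f (i, 0)) (f (i, 1)) := by
    intro i
    refine hfa ?_
    rw [matchingGraph_adj]
    exact ⟨by simp, rfl⟩
  set g : Fin k → Fin n := fun i =>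
    if (f (i, 0)).val < a then f (i, 0) else f (i, 1) with hg
  have hgHub : ∀ i, g i ∈ Hub := by
    intro i
    rw [hHub, Finset.mem_filter]
    refine ⟨Finset.mem_univ _, ?_⟩
    rw [hg]
    obtain ⟨-, h2⟩ := hadj i
    by_cases hc : (f (i, 0)).val < a
    · simp [hc]
    · simp [hc]; omega
  have hgval : ∀ i, g i = f (i, 0) ∨ g i = f (i, 1) := by
    intro i
    rw [hg]
    by_cases hc : (f (i, 0)).val < a
    · left; simp [hc]
    · right; simp [hc]
  have hginj : Function.Injective g := by
    intro i j hij
    by_contra hne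
    rcases hgval i with h1 | h1 <;> rcases hgval j with h2 | h2 <;>
      · rw [h1, h2] at hij
        have := hf hij
        simp only [Prod.mk.injEq] at this
        exact hne this.1
  have hcard : k ≤ Hub.card := by
    have := Finset.card_le_card_of_injOn (s := (univ : Finset (Fin k))) (t := Hub) g
      (fun i _ => hgHub i) (fun i _ j _ h => hginj h)
    simpa using this
  rw [starG_hub_card han] at hcard
  omega

lemma starG_no_path {n ℓ : ℕ} (hl : 1 ≤ ℓ) (han : ℓ - 1 ≤ n) :
    ¬ Contains (starG n (ℓ-1)) (pathGraph (2*ℓ)) := by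
  intro hc
  exact starG_no_matching (by omega) han (contains_trans hc (path_contains_matching ℓ))

lemma starG_degree_hub {n a : ℕ} {v : Fin n} (hv : v.val < a) :
    (starG n a).degree v = n - 1 := by
  rw [← card_neighborFinset_eq_degree]
  have : (starG n a).neighborFinset v = univ.erase v := by
    ext w
    rw [mem_neighborFinset, Finset.mem_erase]
    constructor
    · rintro ⟨h1, -⟩
      exact ⟨h1.symm, Finset.mem_univ _⟩
    · rintro ⟨h1, -⟩
      exact ⟨h1.symm, Or.inl hv⟩
  rw [this, Finset.card_erase_of_mem (Finset.mem_univ _), Finset.card_univ, Fintype.card_fin]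

lemma starG_degree_nonhub {n a : ℕ} {v : Fin n} (hv : ¬ v.val < a) (han : a ≤ n) :
    (starG n a).degree v = a := by
  rw [← card_neighborFinset_eq_degree]
  have : (starG n a).neighborFinset v = (univ : Finset (Fin n)).filter (fun x => x.val < a) := by
    ext w
    rw [mem_neighborFinset, Finset.mem_filter]
    constructor
    · rintro ⟨h1, h2 | h2⟩
      · exact absurd h2 hv
      · exact ⟨Finset.mem_univ _, h2⟩
    · rintro ⟨-, h2⟩
      refine ⟨?_, Or.inr h2⟩
      intro hc
      rw [hc] at hv
      exact hv h2
  rw [this, starG_hub_card han]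

lemma starG_count {n a : ℕ} (h : a + 1 ≤ n) :
    (starG n a).edgeFinset.card = a * (n - a) + Nat.choose a 2 := by
  have hsum := sum_degrees_eq_twice_card_edges (starG n a)
  have hsplit : ∑ v ∈ (univ : Finset (Fin n)).filter (fun x => x.val < a), (starG n a).degree v
      + ∑ v ∈ (univ : Finset (Fin n)).filter (fun x => ¬ x.val < a), (starG n a).degree v
      = ∑ v : Fin n, (starG n a).degree v :=
    Finset.sum_filter_add_sum_filter_not univ _ _
  have h1 : ∑ v ∈ (univ : Finset (Fin n)).filter (fun x => x.val < a), (starG n a).degree v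
      = a * (n - 1) := by
    rw [Finset.sum_congr rfl (fun v hv => starG_degree_hub (Finset.mem_filter.mp hv).2),
      Finset.sum_const, smul_eq_mul, starG_hub_card (by omega)]
  have h2 : ∑ v ∈ (univ : Finset (Fin n)).filter (fun x => ¬ x.val < a), (starG n a).degree v
      = (n - a) * a := by
    rw [Finset.sum_congr rfl (fun v hv => starG_degree_nonhub (Finset.mem_filter.mp hv).2 (by omega)),
      Finset.sum_const, smul_eq_mul]
    congr 1
    have := starG_hub_card (n := n) (a := a) (by omega)
    have hcards := Finset.card_filter_add_card_filter_not
      (s := (univ : Finset (Fin n))) (p := fun x : Fin n => x.val < a)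
    rw [Finset.card_univ, Fintype.card_fin] at hcards
    omega
  have hchoose : 2 * Nat.choose a 2 = a * (a - 1) := by
    rw [Nat.choose_two_right]
    have hev : 2 ∣ a * (a - 1) := by
      rcases Nat.even_or_odd a with he | ho
      · exact Dvd.dvd.mul_right he.two_dvd _
      · refine Dvd.dvd.mul_left ?_ _
        rcases ho with ⟨b, hb⟩
        omega
    omega
  have hident : a * (n - 1) + (n - a) * a = 2 * (a * (n - a) + Nat.choose a 2) := by
    obtain ⟨m, hm⟩ : ∃ m, n = m + a + 1 := ⟨n - a - 1, by omega⟩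
    subst hm
    have e1 : m + a + 1 - 1 = m + a := by omega
    have e2 : m + a + 1 - a = m + 1 := by omega
    rw [e1, e2]
    conv_rhs => rw [Nat.mul_add]
    rw [hchoose]
    cases a with
    | zero => simp
    | succ b =>
      have e3 : b + 1 - 1 = b := by omega
      rw [e3]
      ring
  omega

end EPE

/-- For `2 ≤ ℓ ≤ s` and sufficiently large `n`,
`ex(n, {P_{2ℓ}, M_{s+1}}) = (ℓ − 1)(n − ℓ + 1) + C(ℓ−1,2)`. -/
theorem even_path_extremal (ℓ s : ℕ) (hl : 2 ≤ ℓ) (hls : ℓ ≤ s) :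
    ∃ n₀ : ℕ, ∀ n : ℕ, n₀ ≤ n →
      exNum n (fun G =>
          ¬ Contains G (pathGraph (2 * ℓ)) ∧ ¬ Contains G (matchingGraph (s + 1))) =
        (ℓ - 1) * (n - ℓ + 1) + Nat.choose (ℓ - 1) 2 := by
  classical
  refine ⟨EPE.N0 ℓ s, fun n hn => ?_⟩
  have hnl : ℓ + 1 ≤ n := by
    have h1 : ℓ*ℓ + 2*ℓ ≤ EPE.N0 ℓ s := by rw [EPE.N0]; omega
    have h2 : 2 ≤ ℓ*ℓ := by nlinarith
    omega
  set T := (ℓ - 1) * (n - ℓ + 1) + Nat.choose (ℓ - 1) 2 with hT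
  have hstar_count : edgeCount (EPE.starG n (ℓ-1)) = T := by
    rw [EPE.edgeCount_eq_card, EPE.starG_count (by omega), hT]
    have he : n - (ℓ-1) = n - ℓ + 1 := by omega
    rw [he]
  have hstar_free1 : ¬ Contains (EPE.starG n (ℓ-1)) (pathGraph (2*ℓ)) :=
    EPE.starG_no_path (by omega) (by omega)
  have hstar_free2 : ¬ Contains (EPE.starG n (ℓ-1)) (matchingGraph (s+1)) :=
    EPE.starG_no_matching (by omega) (by omega)
  have hmem : T ∈ {m | ∃ G : SimpleGraph (Fin n),
      (¬ Contains G (pathGraph (2 * ℓ)) ∧ ¬ Contains G (matchingGraph (s + 1)))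
      ∧ m = edgeCount G} :=
    ⟨EPE.starG n (ℓ-1), ⟨hstar_free1, hstar_free2⟩, hstar_count.symm⟩
  have hub : ∀ m ∈ {m | ∃ G : SimpleGraph (Fin n),
      (¬ Contains G (pathGraph (2 * ℓ)) ∧ ¬ Contains G (matchingGraph (s + 1)))
      ∧ m = edgeCount G}, m ≤ T := by
    rintro m ⟨G, ⟨hP, hM⟩, rfl⟩
    letI : DecidableRel G.Adj := fun a b => Classical.dec _
    rw [EPE.edgeCount_eq_card, hT]
    exact EPE.upper hl hls hn G hP hM
  rw [exNum]
  exact le_antisymm (csSup_le ⟨T, hmem⟩ hub) (le_csSup ⟨T, hub⟩ hmem)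
end

section
/- Let F be a balanced tree on 2p vertices with p ≥ 2 (so F is a tree whose two bipartition classes both have size p). Then F has a vertex x that is adjacent to at least one leaf of F, to at most p − 1 leaves of F, and to exactly one vertex of degree greater than 1. -/
open SimpleGraph Finset

section Helpers

variable {V : Type*} {F : SimpleGraph V}

lemma adj_opp {A : Set V} (hA : twoColorClass F A) {u w : V} (h : F.Adj u w) :
    (u ∈ A ↔ w ∉ A) := by
  by_cases hu : u ∈ A <;> by_cases hw : w ∈ A
  · exact absurd h (hA.1 u hu w hw)
  · tauto
  · tauto
  · exact absurd h (hA.2 u hu w hw)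

lemma walk_parity {A : Set V} (hA : twoColorClass F A) :
    ∀ {u v : V} (q : F.Walk u v), ((u ∈ A ↔ v ∈ A) ↔ Even q.length) := by
  intro u v q
  induction q with
  | nil => simp
  | @cons a b c h q ih =>
    have hopp := adj_opp hA h
    rw [Walk.length_cons, Nat.even_add_one, ← ih]
    tauto

lemma pair_trap [Fintype V] [DecidableRel F.Adj] {u v : V}
    (hu : F.neighborFinset u = {v}) (hv : F.neighborFinset v = {u}) :
    ∀ {a b : V}, F.Walk a b → a = u ∨ a = v → b = u ∨ b = v := by
  intro a b q
  induction q with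
  | nil => exact id
  | @cons a c b h q ih =>
    intro hab
    apply ih
    rcases hab with rfl | rfl
    · right
      have hm : c ∈ F.neighborFinset a := (F.mem_neighborFinset _ _).2 h
      rw [hu] at hm
      simpa using hm
    · left
      have hm : c ∈ F.neighborFinset a := (F.mem_neighborFinset _ _).2 h
      rw [hv] at hm
      simpa using hm

lemma nbhd_singleton [Fintype V] [DecidableRel F.Adj] {u w : V}
    (h : F.Adj u w) (hd : F.degree u = 1) : F.neighborFinset u = {w} := by
  have hm : w ∈ F.neighborFinset u := (F.mem_neighborFinset _ _).2 h
  have hc : (F.neighborFinset u).card = 1 := by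
    rw [F.card_neighborFinset_eq_degree, hd]
  refine Finset.eq_singleton_iff_unique_mem.2 ⟨hm, fun b hb => ?_⟩
  exact Finset.card_le_one.1 (le_of_eq hc) b hb w hm

end Helpers

/-- A balanced tree `F` on `2p` vertices with `p ≥ 2` has a vertex `x` adjacent to at least
one leaf, to at most `p − 1` leaves, and to exactly one vertex of degree greater than 1. -/
theorem balanced_tree_special_vertex {V : Type*} [Fintype V] (F : SimpleGraph V)
    [DecidableRel F.Adj] (hT : F.IsTree) (p : ℕ) (hp : 2 ≤ p)
    (hcard : Fintype.card V = 2 * p) (A : Set V) (hA : twoColorClass F A)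
    (hAcard : A.ncard = p) :
    ∃ x : V,
      (∃ y : V, F.Adj x y ∧ F.degree y = 1) ∧
      ((F.neighborFinset x).filter (fun y => F.degree y = 1)).card ≤ p - 1 ∧
      ((F.neighborFinset x).filter (fun y => 1 < F.degree y)).card = 1 := by
  classical
  obtain ⟨hconn, hacyc⟩ := hT
  have hV4 : 4 ≤ Fintype.card V := by omega
  have hVpos : Nonempty V := Fintype.card_pos_iff.1 (by omega)
  obtain ⟨r⟩ := hVpos
  -- complement class has size p
  have hAc : Aᶜ.ncard = p := by
    have h2 := Set.ncard_add_ncard_compl A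
    rw [Nat.card_eq_fintype_card, hcard, hAcard] at h2
    omega
  -- every vertex has positive degree
  have hdegpos : ∀ v : V, 0 < F.degree v := by
    intro v
    obtain ⟨w, hw⟩ := Fintype.exists_ne_of_one_lt_card (by omega) v
    obtain ⟨q⟩ := hconn v w
    cases q with
    | nil => exact absurd rfl hw
    | cons h _ => exact (F.degree_pos_iff_exists_adj v).2 ⟨_, h⟩
  -- no vertex x can have all other vertices being leaves (star contradiction)
  have hstar : ∀ x : V, ¬ (∀ v : V, v ≠ x → F.degree v = 1) := by
    intro x hall
    have hadjx : ∀ v : V, v ≠ x → F.Adj x v := by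
      intro v hv
      obtain ⟨w, hw⟩ := (F.degree_pos_iff_exists_adj v).1 (hdegpos v)
      by_cases hwx : w = x
      · exact (hwx ▸ hw).symm
      · exfalso
        have hnv : F.neighborFinset v = {w} := nbhd_singleton hw (hall v hv)
        have hnw : F.neighborFinset w = {v} := nbhd_singleton hw.symm (hall w hwx)
        obtain ⟨q⟩ := hconn v x
        rcases pair_trap hnv hnw q (Or.inl rfl) with h | h
        · exact hv h.symm
        · exact hwx h.symm
    have hx1 : ({x} : Set V).ncard + ({x}ᶜ : Set V).ncard = Nat.card V :=
      Set.ncard_add_ncard_compl _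
    rw [Set.ncard_singleton, Nat.card_eq_fintype_card, hcard] at hx1
    by_cases hxA : x ∈ A
    · have hsub : ({x}ᶜ : Set V) ⊆ Aᶜ := by
        intro v hv
        exact (adj_opp hA (hadjx v (by simpa using hv))).1 hxA
      have h1 := Set.ncard_le_ncard hsub (Set.toFinite _)
      rw [hAc] at h1
      omega
    · have hsub : ({x}ᶜ : Set V) ⊆ A := by
        intro v hv
        have := adj_opp hA (hadjx v (by simpa using hv))
        tauto
      have h1 := Set.ncard_le_ncard hsub (Set.toFinite _)
      rw [hAcard] at h1
      omega
  -- shortest walks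
  have hdwalk : ∀ v : V, ∃ q : F.Walk r v, q.length = F.dist r v :=
    fun v => hconn.exists_walk_length_eq_dist r v
  -- adjacent vertices have distances differing by exactly one
  have hadj_dist : ∀ {u w : V}, F.Adj u w →
      (F.dist r w = F.dist r u + 1 ∨ F.dist r u = F.dist r w + 1) := by
    intro u w h
    obtain ⟨qu, hqu⟩ := hdwalk u
    obtain ⟨qw, hqw⟩ := hdwalk w
    have h1 : F.dist r w ≤ F.dist r u + 1 := by
      have := F.dist_le (qu.concat h)
      rwa [Walk.length_concat, hqu] at this
    have h2 : F.dist r u ≤ F.dist r w + 1 := by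
      have := F.dist_le (qw.concat h.symm)
      rwa [Walk.length_concat, hqw] at this
    have hne : F.dist r u ≠ F.dist r w := by
      intro heq
      have pu := walk_parity hA qu
      have pw := walk_parity hA qw
      rw [hqu, heq] at pu
      rw [hqw] at pw
      have ho := adj_opp hA h
      tauto
    omega
  -- parent existence
  have hparent : ∀ v : V, F.dist r v ≠ 0 →
      ∃ z, F.Adj v z ∧ F.dist r z + 1 = F.dist r v := by
    intro v hv
    have hrv : r ≠ v := by
      intro h
      subst h
      simp at hv
    obtain ⟨q, hq⟩ := hdwalk v
    obtain ⟨z, hadj, q', hq'⟩ := Walk.exists_eq_cons_of_ne (Ne.symm hrv) q.reverse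
    have hzle : F.dist r z ≤ F.dist r v - 1 := by
      have h1 : F.dist r z ≤ q'.reverse.length := F.dist_le q'.reverse
      have h2 : q.reverse.length = q'.length + 1 := by rw [hq']; simp
      rw [Walk.length_reverse] at h1 h2
      omega
    rcases hadj_dist hadj.symm with h1 | h2
    · exact ⟨z, hadj, h1.symm⟩
    · exfalso
      omega
  -- parent uniqueness
  have huniq : ∀ {v z₁ z₂ : V}, F.Adj v z₁ → F.Adj v z₂ →
      F.dist r z₁ + 1 = F.dist r v → F.dist r z₂ + 1 = F.dist r v → z₁ = z₂ := by
    intro v z₁ z₂ h₁ h₂ hd₁ hd₂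
    obtain ⟨q₁, hq₁⟩ := hdwalk z₁
    obtain ⟨q₂, hq₂⟩ := hdwalk z₂
    have hw₁ : (q₁.concat h₁.symm).length = F.dist r v := by
      rw [Walk.length_concat, hq₁, hd₁]
    have hw₂ : (q₂.concat h₂.symm).length = F.dist r v := by
      rw [Walk.length_concat, hq₂, hd₂]
    have hp₁ : (q₁.concat h₁.symm).IsPath := Walk.isPath_of_length_eq_dist _ hw₁
    have hp₂ : (q₂.concat h₂.symm).IsPath := Walk.isPath_of_length_eq_dist _ hw₂
    have hpu := hacyc.path_unique ⟨_, hp₁⟩ ⟨_, hp₂⟩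
    have heq : q₁.concat h₁.symm = q₂.concat h₂.symm := congrArg Subtype.val hpu
    have := congrArg (fun w : F.Walk r v => w.reverse.getVert 1) heq
    simpa [Walk.reverse_concat, Walk.getVert_cons] using this
  -- choose x of degree ≥ 2 at maximal distance from r
  have hSne : (Finset.univ.filter (fun v => 2 ≤ F.degree v)).Nonempty := by
    obtain ⟨w, hw⟩ := (F.degree_pos_iff_exists_adj r).1 (hdegpos r)
    by_cases h1 : 2 ≤ F.degree r
    · exact ⟨r, by simp [h1]⟩
    by_cases h2 : 2 ≤ F.degree w
    · exact ⟨w, by simp [h2]⟩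
    exfalso
    have hdr : F.degree r = 1 := by have := hdegpos r; omega
    have hdw : F.degree w = 1 := by have := hdegpos w; omega
    have hnr : F.neighborFinset r = {w} := nbhd_singleton hw hdr
    have hnw : F.neighborFinset w = {r} := nbhd_singleton hw.symm hdw
    have hex : ∃ z : V, z ≠ r ∧ z ≠ w := by
      by_contra hno
      push_neg at hno
      have hsub : (Finset.univ : Finset V) ⊆ {r, w} := by
        intro z _
        rcases eq_or_ne z r with rfl | hz
        · simp
        · simp [hno z hz]
      have := Finset.card_le_card hsub
      have h2 : ({r, w} : Finset V).card ≤ 2 :=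
        (Finset.card_insert_le _ _).trans (by simp)
      rw [Finset.card_univ, hcard] at this
      omega
    obtain ⟨z, hz1, hz2⟩ := hex
    obtain ⟨q⟩ := hconn r z
    rcases pair_trap hnr hnw q (Or.inl rfl) with h | h
    · exact hz1 h
    · exact hz2 h
  obtain ⟨x, hxS, hxmax⟩ :=
    Finset.exists_max_image (Finset.univ.filter (fun v => 2 ≤ F.degree v)) (F.dist r) hSne
  have hxdeg : 2 ≤ F.degree x := by simpa using hxS
  have hmax : ∀ v, 2 ≤ F.degree v → F.dist r v ≤ F.dist r x := by
    intro v hv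
    exact hxmax v (by simp [hv])
  -- dist r x ≠ 0
  have hdx : F.dist r x ≠ 0 := by
    intro h0
    have hxr : r = x := hconn.dist_eq_zero_iff.1 h0
    apply hstar x
    intro v hv
    have h1 : F.degree v ≤ 1 := by
      by_contra hge
      push_neg at hge
      have hle := hmax v hge
      rw [h0] at hle
      have : r = v := hconn.dist_eq_zero_iff.1 (Nat.le_zero.1 hle)
      exact hv (this ▸ hxr)
    have := hdegpos v
    omega
  obtain ⟨y, hxy, hy⟩ := hparent x hdx
  -- all neighbors other than y are leaves
  have hleaf : ∀ z, F.Adj x z → z ≠ y → F.degree z = 1 := by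
    intro z hz hzy
    rcases hadj_dist hz with h1 | h2
    · have hzd : F.degree z ≤ 1 := by
        by_contra hge
        push_neg at hge
        have := hmax z hge
        omega
      have := hdegpos z
      omega
    · exact absurd (huniq hz hxy (by omega) hy) hzy
  -- y has degree > 1
  have hydeg : 1 < F.degree y := by
    by_contra hle
    push_neg at hle
    have hy1 : F.degree y = 1 := by have := hdegpos y; omega
    have hny : F.neighborFinset y = {x} := nbhd_singleton hxy.symm hy1
    by_cases hyr : F.dist r y = 0
    · have hyr' : r = y := hconn.dist_eq_zero_iff.1 hyr
      apply hstar x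
      intro v hv
      by_contra hvd
      have hv2 : 2 ≤ F.degree v := by have := hdegpos v; omega
      have hvle := hmax v hv2
      have hdx1 : F.dist r x = 1 := by omega
      rcases Nat.lt_or_ge (F.dist r v) 1 with h | h
      · have h0 : F.dist r v = 0 := by omega
        have hrv : r = v := hconn.dist_eq_zero_iff.1 h0
        rw [← hrv, hyr', hy1] at hv2
        omega
      · have hveq : F.dist r v = 1 := by omega
        have hadj : F.Adj r v := dist_eq_one_iff_adj.mp hveq
        have hm : v ∈ F.neighborFinset r := (F.mem_neighborFinset _ _).2 hadj
        rw [hyr', hny] at hm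
        exact hv (by simpa using hm)
    · obtain ⟨z, hyz, hz⟩ := hparent y hyr
      have hm : z ∈ F.neighborFinset y := (F.mem_neighborFinset _ _).2 hyz
      rw [hny] at hm
      have hzx : z = x := by simpa using hm
      rw [hzx] at hz
      omega
  refine ⟨x, ?_, ?_, ?_⟩
  · have hcard2 : 1 < (F.neighborFinset x).card := by
      rw [F.card_neighborFinset_eq_degree]
      omega
    obtain ⟨z, hz, hzy⟩ := Finset.exists_mem_ne hcard2 y
    have hadj := (F.mem_neighborFinset _ _).1 hz
    exact ⟨z, hadj, hleaf z hadj hzy⟩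
  · have hsub : (F.neighborFinset x).filter (fun z => F.degree z = 1) ⊆
        (F.neighborFinset x).erase y := by
      intro z hz
      rw [Finset.mem_filter] at hz
      refine Finset.mem_erase.2 ⟨?_, hz.1⟩
      rintro rfl
      omega
    have h1 := Finset.card_le_card hsub
    have h2 : ((F.neighborFinset x).erase y).card = F.degree x - 1 := by
      rw [Finset.card_erase_of_mem ((F.mem_neighborFinset _ _).2 hxy),
        F.card_neighborFinset_eq_degree]
    have hdegle : F.degree x ≤ p := by
      by_cases hxA : x ∈ A
      · have hsub2 : (↑(F.neighborFinset x) : Set V) ⊆ Aᶜ := by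
          intro z hz
          have hadj := (F.mem_neighborFinset _ _).1 (by simpa using hz)
          exact (adj_opp hA hadj).1 hxA
        have := Set.ncard_le_ncard hsub2 (Set.toFinite _)
        rwa [Set.ncard_coe_finset, F.card_neighborFinset_eq_degree, hAc] at this
      · have hsub2 : (↑(F.neighborFinset x) : Set V) ⊆ A := by
          intro z hz
          have hadj := (F.mem_neighborFinset _ _).1 (by simpa using hz)
          have := adj_opp hA hadj
          tauto
        have := Set.ncard_le_ncard hsub2 (Set.toFinite _)
        rwa [Set.ncard_coe_finset, F.card_neighborFinset_eq_degree, hAcard] at this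
    omega
  · have heq : (F.neighborFinset x).filter (fun z => 1 < F.degree z) = {y} := by
      refine Finset.eq_singleton_iff_unique_mem.2 ⟨?_, ?_⟩
      · exact Finset.mem_filter.2 ⟨(F.mem_neighborFinset _ _).2 hxy, hydeg⟩
      · intro z hz
        rw [Finset.mem_filter, F.mem_neighborFinset] at hz
        by_contra hzy
        have := hleaf z hz.1 hzy
        omega
    rw [heq]
    simp
end
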